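/- arXiv:2310.11356 — 7 statements merged into one kernel-verified Lean document; each statement's English description precedes it below -/
import Mathlib

section
/- Let X be a finite set, 𝔽 a field, r ≥ 0, and let A₁,…,A_r, A : X → 𝔽 be linearly independent functions. Then there exists a function u : X → 𝔽 supported on at most r+1 points of X such that Σ_{x∈X} u(x)A_i(x) = 0 for every i ∈ [r] and Σ_{x∈X} u(x)A(x) = 1. -/
open Finset

/-- `P` is a partition of `[d] = Fin d`: parts are non-empty, pairwise disjoint,
and their union is all of `Fin d`. -/
def IsPartitionOn (d : ℕ) (P : Finset (Finset (Fin d))) : Prop :=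
  (∀ J ∈ P, J.Nonempty) ∧
  (∀ J ∈ P, ∀ K ∈ P, J ≠ K → Disjoint J K) ∧
  P.sup id = Finset.univ

/-- `P` is finer than `Q`: every part of `P` is contained in some part of `Q`. -/
def Finer {d : ℕ} (P Q : Finset (Finset (Fin d))) : Prop :=
  ∀ J ∈ P, ∃ K ∈ Q, J ⊆ K

/-- Least common refinement of two partitions. -/
def partMeet {d : ℕ} (P Q : Finset (Finset (Fin d))) : Finset (Finset (Fin d)) :=
  ((P ×ˢ Q).image fun p => p.1 ∩ p.2).filter fun J => J.Nonempty

/-- Least common refinement of two families of partitions. -/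
def famMeet {d : ℕ} (R₁ R₂ : Finset (Finset (Finset (Fin d)))) :
    Finset (Finset (Finset (Fin d))) :=
  (R₁ ×ˢ R₂).image fun p => partMeet p.1 p.2

/-- `R₂ ≺ R₁` for families of partitions. -/
def FamFiner {d : ℕ} (R₂ R₁ : Finset (Finset (Finset (Fin d)))) : Prop :=
  ∀ P ∈ R₂, ∃ Q ∈ R₁, Finer P Q

/-- `R` is a non-empty family of partitions of `[d]`. -/
def IsPartitionFamily (d : ℕ) (R : Finset (Finset (Finset (Fin d)))) : Prop :=
  R.Nonempty ∧ ∀ P ∈ R, IsPartitionOn d P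

variable {F : Type*} [Field F]

/-- `f` depends only on the coordinates in `J`. -/
def DependsOnlyOn {d : ℕ} {n : Fin d → ℕ} (f : (∀ j, Fin (n j)) → F)
    (J : Finset (Fin d)) : Prop :=
  ∀ x y : ∀ j, Fin (n j), (∀ j ∈ J, x j = y j) → f x = f y

/-- `T` has `R`-rank at most 1. -/
def RankOne {d : ℕ} {n : Fin d → ℕ} (R : Finset (Finset (Finset (Fin d))))
    (T : (∀ j, Fin (n j)) → F) : Prop :=
  ∃ P ∈ R, ∃ a : Finset (Fin d) → ((∀ j, Fin (n j)) → F),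
    (∀ J ∈ P, DependsOnlyOn (a J) J) ∧ ∀ x, T x = ∏ J ∈ P, a J x

/-- `T` has `R`-rank at most `k`. -/
def RRankLE {d : ℕ} {n : Fin d → ℕ} (R : Finset (Finset (Finset (Fin d))))
    (T : (∀ j, Fin (n j)) → F) (k : ℕ) : Prop :=
  ∃ c : Fin k → ((∀ j, Fin (n j)) → F),
    (∀ i, RankOne R (c i)) ∧ ∀ x, T x = ∑ i, c i x

open Classical in
/-- The tensor `Δ_P`, the product of the identity tensors on the parts of `P`. -/
noncomputable def DeltaP {d n : ℕ} (P : Finset (Finset (Fin d))) :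
    (Fin d → Fin n) → F :=
  fun x => if ∀ J ∈ P, ∀ j₁ ∈ J, ∀ j₂ ∈ J, x j₁ = x j₂ then 1 else 0

theorem exists_small_support_dual {X : Type*} [Fintype X] (r : ℕ)
    (A : Fin r → X → F) (B : X → F)
    (h : LinearIndependent F (Fin.snoc A B : Fin (r + 1) → X → F)) :
    ∃ u : X → F, (Function.support u).ncard ≤ r + 1 ∧
      (∀ i : Fin r, ∑ x, u x * A i x = 0) ∧ ∑ x, u x * B x = 1 := by
  classical
  set w : Fin (r + 1) → X → F := Fin.snoc A B with hw
  set v : X → (Fin (r + 1) → F) := fun x i => w i x with hv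
  -- the columns span everything
  have hspan : Submodule.span F (Set.range v) = ⊤ := by
    set M : Matrix (Fin (r + 1)) X F := Matrix.of w with hM
    have hrank : M.rank = r + 1 := by
      have := h.rank_matrix (M := M)
      simpa using this
    have h1 : Module.finrank F (Submodule.span F (Set.range v)) = r + 1 := by
      rw [show Set.range v = Set.range M.transpose.row from rfl,
        ← Matrix.rank_eq_finrank_span_row, Matrix.rank_transpose, hrank]
    apply Submodule.eq_top_of_finrank_eq
    rw [h1, Module.finrank_pi]
    simp
  obtain ⟨s, hs_sub, hs_span, hs_li⟩ := exists_linearIndependent F (Set.range v)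
  have hsfin : s.Finite := (Set.finite_range v).subset hs_sub
  set t : Finset (Fin (r + 1) → F) := hsfin.toFinset with ht
  have hts : (t : Set (Fin (r + 1) → F)) = s := hsfin.coe_toFinset
  have htcard : t.card ≤ r + 1 := by
    haveI : Fintype s := hsfin.fintype
    have h1 : Module.finrank F (Submodule.span F s) = s.toFinset.card :=
      finrank_span_set_eq_card hs_li
    have h2 : s.toFinset.card = t.card := by
      congr 1
      ext y; simp [ht]
    have h3 : Module.finrank F (Submodule.span F s) ≤ r + 1 := by
      have := Submodule.finrank_le (Submodule.span F s)
      rwa [Module.finrank_pi, Fintype.card_fin] at this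
    omega
  -- the target vector
  set e : Fin (r + 1) → F := Pi.single (Fin.last r) 1 with he
  have he_mem : e ∈ Submodule.span F (↑t : Set (Fin (r + 1) → F)) := by
    rw [hts, hs_span, hspan]; trivial
  obtain ⟨c, -, hc⟩ := Submodule.mem_span_finset.1 he_mem
  have hX : Nonempty X := by
    by_contra hX
    have : w (Fin.last r) = 0 := by
      funext x; exact absurd ⟨x⟩ hX
    exact h.ne_zero (Fin.last r) this
  -- pick preimages
  have hpick : ∀ y ∈ t, ∃ x : X, v x = y := by
    intro y hy
    have : y ∈ s := by rw [← hts]; exact_mod_cast hy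
    exact hs_sub this
  set pick : (Fin (r + 1) → F) → X := fun y =>
    if hy : ∃ x : X, v x = y then hy.choose else Classical.arbitrary X with hpickdef
  have hvpick : ∀ y ∈ t, v (pick y) = y := by
    intro y hy
    have hy' := hpick y hy
    simp only [hpickdef]
    rw [dif_pos hy']
    exact hy'.choose_spec
  have hinj : Set.InjOn pick ↑t := by
    intro y₁ h₁ y₂ h₂ hEq
    rw [← hvpick y₁ h₁, ← hvpick y₂ h₂, hEq]
  set S : Finset X := t.image pick with hS
  set u : X → F := fun x => if x ∈ S then c (v x) else 0 with hu
  have hsum : ∀ i : Fin (r + 1), ∑ x, u x * w i x = e i := by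
    intro i
    have h1 : ∑ x, u x * w i x = ∑ x ∈ S, c (v x) * v x i := by
      rw [← Finset.sum_subset (Finset.subset_univ S)]
      · exact Finset.sum_congr rfl fun x hx => by simp [hu, hx, hv]
      · intro x _ hx
        simp [hu, hx]
    have h2 : ∑ x ∈ S, c (v x) * v x i = ∑ y ∈ t, c y * y i := by
      rw [hS, Finset.sum_image (fun a ha b hb => hinj ha hb)]
      exact Finset.sum_congr rfl fun y hy => by rw [hvpick y hy]
    have h3 : (∑ y ∈ t, c y • y) i = e i := by rw [hc]
    rw [h1, h2, ← h3]
    simp [Finset.sum_apply]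
  refine ⟨u, ?_, ?_, ?_⟩
  · have hsub : Function.support u ⊆ ↑S := by
      intro x hx
      by_contra hxS
      exact hx (if_neg (by simpa using hxS))
    calc (Function.support u).ncard ≤ S.card := by
            simpa using Set.ncard_le_ncard hsub S.finite_toSet
      _ ≤ t.card := Finset.card_image_le
      _ ≤ r + 1 := htcard
  · intro i
    have := hsum i.castSucc
    rw [hw] at this
    simp only [Fin.snoc_castSucc] at this
    rw [this, he, Pi.single_apply]
    simp [Fin.castSucc_lt_last i |>.ne]
  · have := hsum (Fin.last r)
    rw [hw] at this
    simp only [Fin.snoc_last] at this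
    rw [this, he]
    simp
end

section
/- Suppose Σ_{i=1}^r a_i(x) b_i(y,z) = Σ_{j=1}^s c_j(y) d_j(x,z) for all (x,y,z) ∈ [n₁]×[n₂]×[n₃], where a_i : [n₁] → 𝔽, b_i : [n₂]×[n₃] → 𝔽, c_j : [n₂] → 𝔽, d_j : [n₁]×[n₃] → 𝔽. Then the common tensor T(x,y,z) given by either side has tensor rank at most rs, i.e., T can be written as a sum of at most rs tensors of the form e(x)f(y)g(z). -/
open Finset

variable {F : Type*} [Field F]

theorem order_three_fragmentation {n₁ n₂ n₃ r s : ℕ}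
    (a : Fin r → Fin n₁ → F) (b : Fin r → Fin n₂ → Fin n₃ → F)
    (c : Fin s → Fin n₂ → F) (dd : Fin s → Fin n₁ → Fin n₃ → F)
    (h : ∀ x y z, ∑ i, a i x * b i y z = ∑ j, c j y * dd j x z) :
    ∃ (e : Fin (r * s) → Fin n₁ → F) (f : Fin (r * s) → Fin n₂ → F)
      (g : Fin (r * s) → Fin n₃ → F),
      ∀ x y z, ∑ i, a i x * b i y z = ∑ i, e i x * f i y * g i z := by
  classical
  let A : (Fin r → F) →ₗ[F] (Fin n₁ → F) :=
    { toFun := fun u x => ∑ i, u i * a i x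
      map_add' := by
        intro u v; funext x
        simp [add_mul, Finset.sum_add_distrib]
      map_smul' := by
        intro t u; funext x
        simp [Finset.mul_sum, mul_assoc] }
  obtain ⟨g, hg⟩ := A.rangeRestrict.exists_rightInverse_of_surjective
      (LinearMap.range_eq_top.mpr A.surjective_rangeRestrict)
  obtain ⟨φ, hφ⟩ := g.exists_extend
  have key : ∀ v (hv : v ∈ LinearMap.range A), A (φ v) = v := by
    intro v hv
    have h1 : φ v = g ⟨v, hv⟩ := congrFun (congrArg DFunLike.coe hφ) ⟨v, hv⟩
    have h2 : A.rangeRestrict (g ⟨v, hv⟩) = ⟨v, hv⟩ :=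
      congrFun (congrArg DFunLike.coe hg) ⟨v, hv⟩
    have := congrArg Subtype.val h2
    rw [h1]; exact this
  refine ⟨fun k => a (finProdFinEquiv.symm k).1,
          fun k => c (finProdFinEquiv.symm k).2,
          fun k z => φ (fun x' => dd (finProdFinEquiv.symm k).2 x' z)
            (finProdFinEquiv.symm k).1, ?_⟩
  intro x y z
  have hmem : (fun x' => ∑ i, a i x' * b i y z) ∈ LinearMap.range A :=
    ⟨fun i => b i y z, by funext x'; simp [A, mul_comm]⟩
  have hT : (fun x' => ∑ i, a i x' * b i y z)
      = ∑ j, c j y • (fun x' => dd j x' z) := by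
    funext x'
    simp [h x' y z, Finset.sum_apply]
  have hφT : φ (fun x' => ∑ i, a i x' * b i y z)
      = ∑ j, c j y • φ (fun x' => dd j x' z) := by
    rw [hT, map_sum]; simp
  have hA := key _ hmem
  calc ∑ i, a i x * b i y z
      = A (φ (fun x' => ∑ i, a i x' * b i y z)) x := by rw [hA]
    _ = ∑ i, (∑ j, c j y * φ (fun x' => dd j x' z) i) * a i x := by
        rw [hφT]
        simp only [A, Finset.sum_apply, Pi.smul_apply, smul_eq_mul, LinearMap.coe_mk, AddHom.coe_mk]
    _ = ∑ p : Fin r × Fin s, a p.1 x * c p.2 y * φ (fun x' => dd p.2 x' z) p.1 := by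
        rw [Fintype.sum_prod_type]
        congr 1; funext i
        rw [Finset.sum_mul]
        congr 1; funext j
        ring
    _ = ∑ k : Fin (r * s), a (finProdFinEquiv.symm k).1 x * c (finProdFinEquiv.symm k).2 y
          * φ (fun x' => dd (finProdFinEquiv.symm k).2 x' z) (finProdFinEquiv.symm k).1 := by
        exact (Fintype.sum_equiv finProdFinEquiv.symm _ _ (fun k => rfl)).symm
end

section
/- Let d ≥ 2 and let T : [n₁] × ⋯ × [n_d] → 𝔽 be an order-d tensor whose j-flattening rank is at most k_j for every j ∈ [d−1]. Then the tensor rank of T is at most k₁ k₂ ⋯ k_{d−1}. -/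
open Finset

variable {F : Type*} [Field F]

private lemma slice_lemma {d : ℕ} {n : Fin d → ℕ} (j : Fin d) (K : ℕ)
    (T : (∀ j', Fin (n j')) → F)
    (a : Fin K → Fin (n j) → F) (b : Fin K → ((∀ j', Fin (n j')) → F))
    (hb : ∀ i, DependsOnlyOn (b i) ({j}ᶜ))
    (hT : ∀ x, T x = ∑ i, a i (x j) * b i x) :
    ∃ M, M ≤ K ∧ ∃ (a' : Fin M → Fin (n j) → F) (t : Fin M → Fin (n j)),
      ∀ x, T x = ∑ l, a' l (x j) * T (Function.update x j (t l)) := by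
  classical
  set α : Fin (n j) → (Fin K → F) := fun s i => a i s with hα
  obtain ⟨s, hsub, hspan, hli⟩ := exists_linearIndependent F (Set.range α)
  have hfin : s.Finite := hli.setFinite
  let S : Finset (Fin K → F) := hfin.toFinset
  have hScoe : (S : Set (Fin K → F)) = s := hfin.coe_toFinset
  have hliS : LinearIndependent F (fun x : (S : Set (Fin K → F)) => (x : Fin K → F)) := by
    rw [hScoe]; exact hli
  have hcard : S.card ≤ K := by
    have h1 : S.card ≤ Module.finrank F (Fin K → F) :=
      LinearIndependent.finset_card_le_finrank hliS
    rwa [Module.finrank_fin_fun] at h1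
  have hmem : ∀ u, α u ∈ Submodule.span F ((S : Set (Fin K → F))) := by
    intro u
    rw [hScoe, hspan]
    exact Submodule.subset_span ⟨u, rfl⟩
  have hrep : ∀ u, ∃ f : (Fin K → F) → F, ∑ v ∈ S, f v • v = α u :=
    fun u => by obtain ⟨g, -, hg⟩ := Submodule.mem_span_finset.mp (hmem u); exact ⟨g, hg⟩
  choose f hf using hrep
  let e : {v // v ∈ S} ≃ Fin S.card := S.equivFin
  have hpre : ∀ l : Fin S.card, ∃ u : Fin (n j), α u = ((e.symm l : {v // v ∈ S}) : Fin K → F) := by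
    intro l
    have h1 : ((e.symm l : {v // v ∈ S}) : Fin K → F) ∈ s := by
      have h2 := (e.symm l).2
      rw [← hScoe]
      exact h2
    exact hsub h1
  choose t ht using hpre
  refine ⟨S.card, hcard, fun l u => f u ((e.symm l : {v // v ∈ S}) : Fin K → F), t, fun x => ?_⟩
  have hslice : ∀ l, T (Function.update x j (t l)) =
      ∑ i, ((e.symm l : {v // v ∈ S}) : Fin K → F) i * b i x := by
    intro l
    rw [hT]
    refine Finset.sum_congr rfl fun i _ => ?_
    have h2 : b i (Function.update x j (t l)) = b i x := by
      apply hb i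
      intro j' hj'
      have hne : j' ≠ j := by simpa using hj'
      exact Function.update_of_ne hne _ x
    rw [Function.update_self, h2]
    have h3 : a i (t l) = ((e.symm l : {v // v ∈ S}) : Fin K → F) i := congrFun (ht l) i
    rw [h3]
  have key : ∀ i, (∑ l : Fin S.card,
      f (x j) ((e.symm l : {v // v ∈ S}) : Fin K → F) * ((e.symm l : {v // v ∈ S}) : Fin K → F) i)
      = a i (x j) := by
    intro i
    calc ∑ l : Fin S.card,
          f (x j) ((e.symm l : {v // v ∈ S}) : Fin K → F) * ((e.symm l : {v // v ∈ S}) : Fin K → F) i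
        = ∑ v : {v // v ∈ S}, f (x j) (v : Fin K → F) * (v : Fin K → F) i :=
          Equiv.sum_comp e.symm (fun w : {v // v ∈ S} => f (x j) (w : Fin K → F) * (w : Fin K → F) i)
      _ = ∑ v ∈ S, f (x j) v * v i := Finset.sum_coe_sort S (fun w => f (x j) w * w i)
      _ = (∑ v ∈ S, f (x j) v • v) i := by
          rw [Finset.sum_apply]
          exact Finset.sum_congr rfl fun v _ => rfl
      _ = α (x j) i := by rw [hf (x j)]
      _ = a i (x j) := rfl
  calc T x = ∑ i, a i (x j) * b i x := hT x
    _ = ∑ i, (∑ l : Fin S.card,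
          f (x j) ((e.symm l : {v // v ∈ S}) : Fin K → F) * ((e.symm l : {v // v ∈ S}) : Fin K → F) i) * b i x := by
        refine Finset.sum_congr rfl fun i _ => ?_
        rw [key i]
    _ = ∑ i, ∑ l : Fin S.card,
          f (x j) ((e.symm l : {v // v ∈ S}) : Fin K → F) * (((e.symm l : {v // v ∈ S}) : Fin K → F) i * b i x) := by
        refine Finset.sum_congr rfl fun i _ => ?_
        rw [Finset.sum_mul]
        exact Finset.sum_congr rfl fun l _ => mul_assoc _ _ _
    _ = ∑ l : Fin S.card, ∑ i,
          f (x j) ((e.symm l : {v // v ∈ S}) : Fin K → F) * (((e.symm l : {v // v ∈ S}) : Fin K → F) i * b i x) :=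
        Finset.sum_comm
    _ = ∑ l : Fin S.card, f (x j) ((e.symm l : {v // v ∈ S}) : Fin K → F) * T (Function.update x j (t l)) := by
        refine Finset.sum_congr rfl fun l _ => ?_
        rw [hslice l, Finset.mul_sum]

private lemma main_claim {d : ℕ} {n : Fin d → ℕ} (k : Fin d → ℕ)
    (T : (∀ j, Fin (n j)) → F) (x₀ : ∀ j, Fin (n j))
    (h : ∀ j : Fin d, (j : ℕ) < d - 1 →
      ∃ M, M ≤ k j ∧ ∃ (a' : Fin M → Fin (n j) → F) (t : Fin M → Fin (n j)),
        ∀ x, T x = ∑ l, a' l (x j) * T (Function.update x j (t l))) :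
    ∀ m : ℕ, m ≤ d - 1 →
      ∃ N, N ≤ ∏ j ∈ Finset.univ.filter (fun j : Fin d => (j : ℕ) < m), k j ∧
      ∃ (c : Fin N → ∀ j, Fin (n j) → F) (Y : Fin N → ∀ j, Fin (n j)),
        ∀ x, T x = ∑ i, (∏ j ∈ Finset.univ.filter (fun j : Fin d => (j : ℕ) < m), c i j (x j))
          * T (fun j => if (j : ℕ) < m then Y i j else x j) := by
  intro m
  induction m with
  | zero =>
    intro _
    refine ⟨1, by simp, fun _ _ _ => 1, fun _ => x₀, fun x => ?_⟩
    simp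
  | succ m ih =>
    intro hm
    obtain ⟨N, hN, c, Y, hc⟩ := ih (le_trans (Nat.le_succ m) hm)
    have hmd : m < d - 1 := hm
    have hdd : m < d := by omega
    set jm : Fin d := ⟨m, hdd⟩ with hjm
    obtain ⟨M, hM, a', t, hS⟩ := h jm hmd
    have hfilter : Finset.univ.filter (fun j : Fin d => (j : ℕ) < m + 1)
        = insert jm (Finset.univ.filter (fun j : Fin d => (j : ℕ) < m)) := by
      ext j
      have hj := j.isLt
      simp only [Finset.mem_filter, Finset.mem_univ, true_and, Finset.mem_insert, Fin.ext_iff,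
        hjm]
      omega
    have hjm_not : jm ∉ Finset.univ.filter (fun j : Fin d => (j : ℕ) < m) := by
      simp [hjm]
    have hprod : ∏ j ∈ Finset.univ.filter (fun j : Fin d => (j : ℕ) < m + 1), k j
        = k jm * ∏ j ∈ Finset.univ.filter (fun j : Fin d => (j : ℕ) < m), k j := by
      rw [hfilter, Finset.prod_insert hjm_not]
    have hbound : N * M ≤ ∏ j ∈ Finset.univ.filter (fun j : Fin d => (j : ℕ) < m + 1), k j := by
      rw [hprod, Nat.mul_comm]
      exact Nat.mul_le_mul hM hN
    set e : Fin N × Fin M ≃ Fin (N * M) := finProdFinEquiv with he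
    set c' : Fin (N * M) → ∀ j, Fin (n j) → F := fun p j =>
      if hj : j = jm then (fun v => a' (e.symm p).2 (Fin.cast (congrArg n hj) v))
      else c (e.symm p).1 j with hc'
    set Y' : Fin (N * M) → ∀ j, Fin (n j) := fun p =>
      Function.update (Y (e.symm p).1) jm (t (e.symm p).2) with hY'
    refine ⟨N * M, hbound, c', Y', fun x => ?_⟩
    have hupd : ∀ (i : Fin N) (l : Fin M),
        Function.update (fun j : Fin d => if (j : ℕ) < m then Y i j else x j) jm (t l)
          = fun j : Fin d => if (j : ℕ) < m + 1 then Function.update (Y i) jm (t l) j else x j := by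
      intro i l
      funext j
      by_cases hj : j = jm
      · subst hj; simp [hjm]
      · have hjv : (j : ℕ) ≠ m := fun hcon => hj (Fin.ext (by simp [hjm, hcon]))
        rw [Function.update_of_ne hj, Function.update_of_ne hj]
        by_cases hlt : (j : ℕ) < m
        · rw [if_pos hlt, if_pos (by omega)]
        · rw [if_neg hlt, if_neg (by omega)]
    have hTz : ∀ i : Fin N, T (fun j : Fin d => if (j : ℕ) < m then Y i j else x j)
        = ∑ l : Fin M, a' l (x jm)
            * T (fun j : Fin d => if (j : ℕ) < m + 1 then Function.update (Y i) jm (t l) j else x j) := by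
      intro i
      rw [hS (fun j : Fin d => if (j : ℕ) < m then Y i j else x j)]
      refine Finset.sum_congr rfl fun l _ => ?_
      rw [hupd i l]
      simp [hjm]
    calc T x = ∑ i : Fin N,
          (∏ j ∈ Finset.univ.filter (fun j : Fin d => (j : ℕ) < m), c i j (x j))
            * T (fun j : Fin d => if (j : ℕ) < m then Y i j else x j) := hc x
      _ = ∑ i : Fin N, ∑ l : Fin M,
          (a' l (x jm) * ∏ j ∈ Finset.univ.filter (fun j : Fin d => (j : ℕ) < m), c i j (x j))
            * T (fun j : Fin d => if (j : ℕ) < m + 1 then Function.update (Y i) jm (t l) j else x j) := by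
          refine Finset.sum_congr rfl fun i _ => ?_
          rw [hTz i, Finset.mul_sum]
          exact Finset.sum_congr rfl fun l _ => by ring
      _ = ∑ p : Fin (N * M),
          (∏ j ∈ Finset.univ.filter (fun j : Fin d => (j : ℕ) < m + 1), c' p j (x j))
            * T (fun j : Fin d => if (j : ℕ) < m + 1 then Y' p j else x j) := by
          rw [← Equiv.sum_comp e (fun p =>
            (∏ j ∈ Finset.univ.filter (fun j : Fin d => (j : ℕ) < m + 1), c' p j (x j))
              * T (fun j : Fin d => if (j : ℕ) < m + 1 then Y' p j else x j)), Fintype.sum_prod_type]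
          refine Finset.sum_congr rfl fun i _ => Finset.sum_congr rfl fun l _ => ?_
          have hsymm : e.symm (e (i, l)) = (i, l) := Equiv.symm_apply_apply _ _
          have hprod' : ∏ j ∈ Finset.univ.filter (fun j : Fin d => (j : ℕ) < m + 1),
              c' (e (i, l)) j (x j)
              = a' l (x jm)
                * ∏ j ∈ Finset.univ.filter (fun j : Fin d => (j : ℕ) < m), c i j (x j) := by
            rw [hfilter, Finset.prod_insert hjm_not]
            congr 1
            · show c' (e (i, l)) jm (x jm) = a' l (x jm)
              simp [hc', hsymm]
            · refine Finset.prod_congr rfl fun j hj => ?_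
              have hjlt : (j : ℕ) < m := by simpa using hj
              have hne : j ≠ jm := fun hcon => by
                rw [hcon] at hjlt
                simp [hjm] at hjlt
              simp [hc', dif_neg hne, hsymm]
          have hYe : Y' (e (i, l)) = Function.update (Y i) jm (t l) := by
            simp [hY', hsymm]
          rw [hprod', hYe]

private lemma sum_castLE {β : Type*} [AddCommMonoid β] {N P : ℕ} (hNP : N ≤ P) (g : Fin P → β)
    (hz : ∀ i : Fin P, ¬ (i : ℕ) < N → g i = 0) :
    ∑ i : Fin P, g i = ∑ i : Fin N, g (Fin.castLE hNP i) := by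
  classical
  calc ∑ i : Fin P, g i
      = ∑ i ∈ Finset.univ.map ⟨Fin.castLE hNP, Fin.castLE_injective hNP⟩, g i := by
        refine (Finset.sum_subset (Finset.subset_univ _) ?_).symm
        intro i _ hi
        refine hz i fun hiN => hi ?_
        simp only [Finset.mem_map, Finset.mem_univ, true_and, Function.Embedding.coeFn_mk]
        exact ⟨⟨(i : ℕ), hiN⟩, Fin.ext rfl⟩
    _ = ∑ i : Fin N, g (Fin.castLE hNP i) := Finset.sum_map _ _ g

theorem tensor_rank_le_prod_flattening {d : ℕ} (hd : 2 ≤ d)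
    (n : Fin d → ℕ) (k : Fin d → ℕ) (T : (∀ j, Fin (n j)) → F)
    (h : ∀ j : Fin d, (j : ℕ) < d - 1 →
      ∃ (a : Fin (k j) → Fin (n j) → F)
        (b : Fin (k j) → ((∀ j', Fin (n j')) → F)),
        (∀ i, DependsOnlyOn (b i) ({j}ᶜ)) ∧ ∀ x, T x = ∑ i, a i (x j) * b i x) :
    ∃ c : Fin (∏ j ∈ Finset.univ.filter (fun j : Fin d => (j : ℕ) < d - 1), k j) →
        ((j : Fin d) → Fin (n j) → F),
      ∀ x, T x = ∑ i, ∏ j, c i j (x j) := by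
  classical
  by_cases hne : Nonempty (∀ j, Fin (n j))
  case neg => exact ⟨fun _ _ _ => 0, fun x => absurd ⟨x⟩ hne⟩
  obtain ⟨x₀⟩ := hne
  have h' : ∀ j : Fin d, (j : ℕ) < d - 1 →
      ∃ M, M ≤ k j ∧ ∃ (a' : Fin M → Fin (n j) → F) (t : Fin M → Fin (n j)),
        ∀ x, T x = ∑ l, a' l (x j) * T (Function.update x j (t l)) := by
    intro j hj
    obtain ⟨a, b, hb, hT⟩ := h j hj
    exact slice_lemma j (k j) T a b hb hT
  obtain ⟨N, hN, c, Y, hc⟩ := main_claim k T x₀ h' (d - 1) le_rfl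
  set jl : Fin d := ⟨d - 1, by omega⟩ with hjl
  set C : Fin (∏ j ∈ Finset.univ.filter (fun j : Fin d => (j : ℕ) < d - 1), k j) →
      ∀ j, Fin (n j) → F := fun i j =>
    if hi : (i : ℕ) < N then
      (if (j : ℕ) < d - 1 then c ⟨(i : ℕ), hi⟩ j
       else fun v => T (fun j' => if (j' : ℕ) < d - 1 then Y ⟨(i : ℕ), hi⟩ j'
         else Function.update x₀ j v j'))
    else fun _ => 0 with hC
  refine ⟨C, fun x => ?_⟩
  have hsplit : Finset.univ.filter (fun j : Fin d => ¬ (j : ℕ) < d - 1) = {jl} := by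
    ext j
    have hjd := j.isLt
    simp only [Finset.mem_filter, Finset.mem_univ, true_and, Finset.mem_singleton, Fin.ext_iff,
      hjl]
    omega
  have hzero : ∀ i : Fin (∏ j ∈ Finset.univ.filter (fun j : Fin d => (j : ℕ) < d - 1), k j),
      ¬ (i : ℕ) < N → (∏ j, C i j (x j)) = 0 := by
    intro i hi
    apply Finset.prod_eq_zero (Finset.mem_univ jl)
    simp [hC, dif_neg hi]
  rw [sum_castLE hN (fun i => ∏ j, C i j (x j)) hzero]
  have hCi : ∀ (i : Fin N) (j : Fin d), C (Fin.castLE hN i) j =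
      if (j : ℕ) < d - 1 then c i j
      else fun v => T (fun j' => if (j' : ℕ) < d - 1 then Y i j'
        else Function.update x₀ j v j') := by
    intro i j
    have hlt : ((Fin.castLE hN i : Fin _) : ℕ) < N := i.isLt
    have hmk : (⟨((Fin.castLE hN i : Fin _) : ℕ), hlt⟩ : Fin N) = i := Fin.ext rfl
    simp only [hC]
    rw [dif_pos hlt, hmk]
  have hterm : ∀ i : Fin N, (∏ j, C (Fin.castLE hN i) j (x j)) =
      (∏ j ∈ Finset.univ.filter (fun j : Fin d => (j : ℕ) < d - 1), c i j (x j))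
        * T (fun j => if (j : ℕ) < d - 1 then Y i j else x j) := by
    intro i
    rw [← Finset.prod_filter_mul_prod_filter_not Finset.univ (fun j : Fin d => (j : ℕ) < d - 1)]
    congr 1
    · refine Finset.prod_congr rfl fun j hj => ?_
      have hjlt : (j : ℕ) < d - 1 := by simpa using hj
      rw [hCi i j, if_pos hjlt]
    · rw [hsplit, Finset.prod_singleton, hCi i jl]
      have hnl : ¬ ((jl : Fin d) : ℕ) < d - 1 := by simp [hjl]
      rw [if_neg hnl]
      congr 1
      funext j'
      by_cases hj' : (j' : ℕ) < d - 1
      · rw [if_pos hj', if_pos hj']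
      · rw [if_neg hj', if_neg hj']
        have : j' = jl := by
          have := j'.isLt
          apply Fin.ext
          simp only [hjl]
          omega
        rw [this, Function.update_self]
  rw [Finset.sum_congr rfl fun i _ => hterm i]
  exact hc x
end

section
/- Let R = { {{1,2},{3,4}}, {{1,3},{2,4}} } be a family of partitions of [4], and let T : [n]⁴ → 𝔽 be defined by T(x₁,x₂,x₃,x₄) = 1 if x₁ = x₄ and x₂ = x₃, and 0 otherwise. Then the R-rank of T is at least n. That is, if Σ_{i=1}^r a_i(x₁,x₂) b_i(x₃,x₄) + Σ_{i=1}^s c_i(x₁,x₃) d_i(x₂,x₄) = T for all inputs, then r + s ≥ n. -/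
open Finset

variable {F : Type*} [Field F]

open Matrix

lemma my_rank_add_le {n : ℕ} (A B : Matrix (Fin n) (Fin n) F) :
    (A + B).rank ≤ A.rank + B.rank := by
  unfold Matrix.rank
  rw [Matrix.mulVecLin_add]
  refine le_trans (Submodule.finrank_mono ?_)
    (Submodule.finrank_add_le_finrank_add_finrank _ _)
  rintro _ ⟨x, rfl⟩
  exact Submodule.add_mem_sup ⟨x, rfl⟩ ⟨x, rfl⟩

lemma my_rank_sum_le {n : ℕ} {ι : Type*} (t : Finset ι) (A : ι → Matrix (Fin n) (Fin n) F) :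
    (∑ i ∈ t, A i).rank ≤ ∑ i ∈ t, (A i).rank := by
  classical
  induction t using Finset.induction_on with
  | empty => simp [Matrix.rank_zero]
  | @insert a s h ih =>
    rw [Finset.sum_insert h, Finset.sum_insert h]
    exact le_trans (my_rank_add_le _ _) (by omega)

lemma my_rank_vecMulVec_le {n : ℕ} (u v : Fin n → F) :
    (Matrix.vecMulVec u v).rank ≤ 1 := by
  classical
  unfold Matrix.rank
  have hrange : LinearMap.range (Matrix.vecMulVec u v).mulVecLin ≤
      Submodule.span F {u} := by
    rintro _ ⟨x, rfl⟩
    have : (Matrix.vecMulVec u v).mulVecLin x = (v ⬝ᵥ x) • u := by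
      ext i
      simp [Matrix.mulVecLin_apply, Matrix.mulVec, Matrix.vecMulVec_apply, dotProduct,
        Finset.mul_sum, mul_comm, mul_left_comm]
    rw [this]
    exact Submodule.smul_mem _ _ (Submodule.mem_span_singleton_self u)
  refine le_trans (Submodule.finrank_mono hrange) ?_
  refine le_trans (finrank_span_le_card ({u} : Set (Fin n → F))) ?_
  simp

theorem naslund_lower_bound {n r s : ℕ} (hn : 1 ≤ n)
    (a b : Fin r → Fin n → Fin n → F) (c d : Fin s → Fin n → Fin n → F)
    (h : ∀ x₁ x₂ x₃ x₄ : Fin n,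
      ∑ i, a i x₁ x₂ * b i x₃ x₄ + ∑ i, c i x₁ x₃ * d i x₂ x₄ =
        if x₁ = x₄ ∧ x₂ = x₃ then (1 : F) else 0) :
    n ≤ r + s := by
  classical
  set z : Fin n := ⟨0, hn⟩
  have hM : (1 : Matrix (Fin n) (Fin n) F) =
      (∑ i, Matrix.vecMulVec (fun x₂ => a i z x₂) (fun x₃ => b i x₃ z)) +
      ∑ i, Matrix.vecMulVec (fun x₂ => d i x₂ z) (fun x₃ => c i z x₃) := by
    ext x₂ x₃
    have := h z x₂ x₃ z
    simp only [Matrix.add_apply, Matrix.sum_apply, Matrix.vecMulVec_apply,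
      Matrix.one_apply]
    simp only [mul_comm (d _ x₂ z) (c _ z x₃), this]
    simp
  have h1 : (1 : Matrix (Fin n) (Fin n) F).rank = n := by
    rw [Matrix.rank_one, Fintype.card_fin]
  rw [← h1, hM]
  calc _ ≤ _ := my_rank_add_le _ _
    _ ≤ (∑ i : Fin r, 1) + ∑ i : Fin s, 1 := by
        gcongr
        · exact le_trans (my_rank_sum_le _ _) (Finset.sum_le_sum fun i _ =>
            my_rank_vecMulVec_le _ _)
        · exact le_trans (my_rank_sum_le _ _) (Finset.sum_le_sum fun i _ =>
            my_rank_vecMulVec_le _ _)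
    _ = r + s := by simp
end

section
/- For every d ≥ 2 and n ≥ 1, the partition rank of the order-d identity tensor Δ_d : [n]^d → 𝔽, defined by Δ_d(x₁,…,x_d) = 1 if x₁ = ⋯ = x_d and 0 otherwise, is equal to n. -/
open Finset

variable {F : Type*} [Field F]

/-- `T` has partition rank at most 1. -/
def PrRankOne {d n : ℕ} (T : (Fin d → Fin n) → F) : Prop :=
  ∃ J : Finset (Fin d), J.Nonempty ∧ J ≠ Finset.univ ∧
    ∃ a b : (Fin d → Fin n) → F,
      DependsOnlyOn (n := fun _ : Fin d => n) a J ∧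
      DependsOnlyOn (n := fun _ : Fin d => n) b Jᶜ ∧
      ∀ x, T x = a x * b x

/-- `T` has partition rank at most `k`. -/
def PrRankLE {d n : ℕ} (T : (Fin d → Fin n) → F) (k : ℕ) : Prop :=
  ∃ c : Fin k → ((Fin d → Fin n) → F),
    (∀ i, PrRankOne (c i)) ∧ ∀ x, T x = ∑ i, c i x

/-- A finite-dimensional subspace of `ι → F` contains a vector whose support is
at least as large as its dimension. -/
lemma aux_max_support {ι : Type*} [Fintype ι] [DecidableEq ι] [DecidableEq F]
    (S : Submodule F (ι → F)) :
    ∃ v ∈ S, Module.finrank F S ≤ (Finset.univ.filter fun i => v i ≠ 0).card := by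
  classical
  set s : Set ℕ := (fun v : S => (Finset.univ.filter fun i => (v : ι → F) i ≠ 0).card) '' Set.univ
    with hs
  have hsne : s.Nonempty := ⟨_, ⟨0, trivial, rfl⟩⟩
  have hbdd : BddAbove s := by
    refine ⟨Fintype.card ι, ?_⟩
    rintro m ⟨v, -, rfl⟩
    exact le_trans (Finset.card_le_card (Finset.filter_subset _ _)) (by simp)
  obtain ⟨v₀, -, hv₀⟩ := Nat.sSup_mem hsne hbdd
  refine ⟨v₀, v₀.2, ?_⟩
  set A : Finset ι := Finset.univ.filter fun i => (v₀ : ι → F) i ≠ 0 with hA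
  have hinj : Function.Injective
      ((LinearMap.funLeft F F (fun i : A => (i : ι))).comp S.subtype) := by
    rw [← LinearMap.ker_eq_bot, LinearMap.ker_eq_bot']
    intro w hw
    by_contra hwne
    have hw' : ∀ i : ι, i ∈ A → (w : ι → F) i = 0 := by
      intro i hi
      have := congrFun hw ⟨i, hi⟩
      simpa using this
    obtain ⟨i₀, hi₀⟩ : ∃ i₀, (w : ι → F) i₀ ≠ 0 := by
      by_contra h
      push_neg at h
      exact hwne (Subtype.ext (funext h))
    have hi₀A : i₀ ∉ A := fun h => hi₀ (hw' i₀ h)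
    -- v₀ + w has strictly larger support
    have hsub : insert i₀ A ⊆ Finset.univ.filter fun i => ((v₀ : ι → F) + (w : ι → F)) i ≠ 0 := by
      intro i hi
      simp only [Finset.mem_insert] at hi
      simp only [Finset.mem_filter, Finset.mem_univ, true_and, Pi.add_apply]
      rcases hi with rfl | hi
      · have : (v₀ : ι → F) i = 0 := by
          by_contra h
          exact hi₀A (by simp [hA, h])
        simpa [this] using hi₀
      · have h1 : (v₀ : ι → F) i ≠ 0 := by simpa [hA] using hi
        have h2 : (w : ι → F) i = 0 := hw' i hi
        simpa [h2] using h1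
    have hlt : A.card < (Finset.univ.filter fun i => ((v₀ : ι → F) + (w : ι → F)) i ≠ 0).card := by
      calc A.card < (insert i₀ A).card := by rw [Finset.card_insert_of_notMem hi₀A]; omega
        _ ≤ _ := Finset.card_le_card hsub
    have hmem : (Finset.univ.filter fun i => ((v₀ : ι → F) + (w : ι → F)) i ≠ 0).card ∈ s := by
      exact ⟨v₀ + w, trivial, rfl⟩
    have h2 := le_csSup hbdd hmem
    have h3 : A.card = sSup s := hv₀
    omega
  have := LinearMap.finrank_le_finrank_of_injective hinj
  simpa [Module.finrank_pi] using this

/-- There is a vector `v` supported in `A`, orthogonal to all the `g i`,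
with support of size at least `|A| - |κ|`. -/
lemma aux_exists_v {n : ℕ} [DecidableEq F] (A : Finset (Fin n)) {κ : Type*} [Fintype κ]
    (g : κ → Fin n → F) :
    ∃ v : Fin n → F, (∀ t, v t ≠ 0 → t ∈ A) ∧ (∀ i, ∑ t, v t * g i t = 0) ∧
      A.card ≤ (Finset.univ.filter fun t => v t ≠ 0).card + Fintype.card κ := by
  classical
  set Φ : (A → F) →ₗ[F] (κ → F) :=
    { toFun := fun w i => ∑ t : A, w t * g i (t : Fin n)
      map_add' := by
        intro w w'
        funext i
        simp [add_mul, Finset.sum_add_distrib]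
      map_smul' := by
        intro r w
        funext i
        simp [Finset.mul_sum, mul_assoc] } with hΦ
  have hrank : A.card ≤ Module.finrank F (LinearMap.ker Φ) + Fintype.card κ := by
    have h1 := LinearMap.finrank_range_add_finrank_ker Φ
    have h2 : Module.finrank F (LinearMap.range Φ) ≤ Fintype.card κ := by
      have := Submodule.finrank_le (LinearMap.range Φ)
      simpa [Module.finrank_pi] using this
    have h3 : Module.finrank F (A → F) = A.card := by
      simp [Module.finrank_pi]
    omega
  obtain ⟨w, hwS, hwcard⟩ := aux_max_support (LinearMap.ker Φ)
  set v : Fin n → F := fun t => if h : t ∈ A then w ⟨t, h⟩ else 0 with hv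
  refine ⟨v, ?_, ?_, ?_⟩
  · intro t ht
    by_contra h
    simp [hv, h] at ht
  · intro i
    have h0 : Φ w = 0 := hwS
    have h0i : ∑ t : A, w t * g i (t : Fin n) = 0 := congrFun h0 i
    calc ∑ t, v t * g i t
        = ∑ t ∈ A, v t * g i t := by
          rw [← Finset.sum_subset (Finset.subset_univ A)]
          intro t _ ht
          simp [hv, ht]
      _ = ∑ t ∈ A.attach, w t * g i (t : Fin n) := by
          rw [← Finset.sum_attach A (fun t => (if h : t ∈ A then w ⟨t, h⟩ else 0) * g i t)]
          apply Finset.sum_congr rfl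
          intro t _
          simp [hv, t.2]
      _ = 0 := by rw [← h0i]; simp [Finset.sum_attach]
  · have hcardle : (Finset.univ.filter fun t : A => w t ≠ 0).card ≤
        (Finset.univ.filter fun t : Fin n => v t ≠ 0).card := by
      refine Finset.card_le_card_of_injOn (fun t => (t : Fin n)) ?_ ?_
      · intro t ht
        simp only [Finset.mem_filter, Finset.mem_univ, true_and] at ht ⊢
        simpa [hv, t.2] using ht
      · intro a _ b _ hab
        exact Subtype.ext hab
    omega

lemma aux_snoc_zero {e n : ℕ} (y : Fin (e + 1) → Fin n) (t : Fin n) :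
    (Fin.snoc y t : Fin (e+2) → Fin n) 0 = y 0 := by
  have h : (0 : Fin (e + 2)) = Fin.castSucc (0 : Fin (e + 1)) := by
    ext; simp
  rw [h, Fin.snoc_castSucc]

lemma aux_snoc_const_iff {e n : ℕ} (y : Fin (e + 1) → Fin n) (t : Fin n) :
    (∀ j₁ j₂ : Fin (e + 2), (Fin.snoc y t : Fin (e+2) → Fin n) j₁ = (Fin.snoc y t : Fin (e+2) → Fin n) j₂) ↔
      (∀ j₁ j₂ : Fin (e + 1), y j₁ = y j₂) ∧ t = y 0 := by
  constructor
  · intro h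
    refine ⟨fun j₁ j₂ => ?_, ?_⟩
    · have := h j₁.castSucc j₂.castSucc
      simpa [Fin.snoc_castSucc] using this
    · have h1 := h (Fin.last _) (Fin.castSucc 0)
      rw [Fin.snoc_last, Fin.snoc_castSucc] at h1
      exact h1
  · rintro ⟨h, rfl⟩ j₁ j₂
    have key : ∀ j : Fin (e + 2), (Fin.snoc y (y 0) : Fin (e+2) → Fin n) j = y 0 := by
      intro j
      induction j using Fin.lastCases with
      | last => simp [Fin.snoc_last]
      | cast i => rw [Fin.snoc_castSucc]; exact h i 0
    rw [key, key]

lemma aux_contract_wdiag {e n : ℕ} (v u : Fin n → F) (y : Fin (e + 1) → Fin n) :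
    (∑ t, v t * (if ∀ j₁ j₂ : Fin (e + 2), (Fin.snoc y t : Fin (e+2) → Fin n) j₁ = (Fin.snoc y t : Fin (e+2) → Fin n) j₂
        then u ((Fin.snoc y t : Fin (e+2) → Fin n) 0) else 0)) =
      (if ∀ j₁ j₂ : Fin (e + 1), y j₁ = y j₂ then v (y 0) * u (y 0) else 0) := by
  by_cases hy : ∀ j₁ j₂ : Fin (e + 1), y j₁ = y j₂
  · rw [if_pos hy]
    have hterm : ∀ t : Fin n,
        v t * (if ∀ j₁ j₂ : Fin (e + 2), (Fin.snoc y t : Fin (e+2) → Fin n) j₁ = (Fin.snoc y t : Fin (e+2) → Fin n) j₂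
          then u ((Fin.snoc y t : Fin (e+2) → Fin n) 0) else 0) = if t = y 0 then v t * u (y 0) else 0 := by
      intro t
      by_cases ht : t = y 0
      · rw [if_pos ht, if_pos, aux_snoc_zero]
        rw [aux_snoc_const_iff]
        exact ⟨hy, ht⟩
      · rw [if_neg ht, if_neg, mul_zero]
        rw [aux_snoc_const_iff]
        tauto
    rw [Finset.sum_congr rfl (fun t _ => hterm t)]
    simp
  · rw [if_neg hy]
    apply Finset.sum_eq_zero
    intro t _
    rw [if_neg, mul_zero]
    rw [aux_snoc_const_iff]
    tauto

lemma aux_snoc_agree {e n : ℕ} {x y : Fin (e+1) → Fin n} {s t : Fin n} {K : Finset (Fin (e+2))}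
    (hlast : Fin.last (e+1) ∈ K → s = t)
    (hrest : ∀ j : Fin (e+1), j.castSucc ∈ K → x j = y j) :
    ∀ j ∈ K, (Fin.snoc x s : Fin (e+2) → Fin n) j = (Fin.snoc y t : Fin (e+2) → Fin n) j := by
  intro j hj
  induction j using Fin.lastCases with
  | last => rw [Fin.snoc_last, Fin.snoc_last]; exact hlast hj
  | cast i => rw [Fin.snoc_castSucc, Fin.snoc_castSucc]; exact hrest i hj

lemma aux_key {n : ℕ} [DecidableEq F] (e : ℕ) :
    ∀ (u : Fin n → F) (k : ℕ),
    PrRankLE (fun x : Fin (e + 1) → Fin n =>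
      if ∀ j₁ j₂ : Fin (e + 1), x j₁ = x j₂ then u (x 0) else 0) k →
    (Finset.univ.filter fun t => u t ≠ 0).card ≤ k := by
  induction e with
  | zero =>
    rintro u k ⟨c, hc1, hc2⟩
    rcases Nat.eq_zero_or_pos k with rfl | hk
    · have hu : ∀ t, u t = 0 := by
        intro t
        have := hc2 (fun _ => t)
        simpa using this
      simp [hu]
    · exfalso
      obtain ⟨J, hJne, hJuniv, -⟩ := hc1 ⟨0, hk⟩
      apply hJuniv
      obtain ⟨j, hj⟩ := hJne
      apply Finset.eq_univ_of_forall
      intro j'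
      rwa [show j' = j from Fin.ext (by omega)]
  | succ e ih =>
    rintro u k ⟨c, hc1, hc2⟩
    classical
    choose J hJne hJuniv a b ha hb hab using hc1
    set lst : Fin (e + 2) := Fin.last (e + 1) with hlst
    set M : Finset (Fin k) := Finset.univ.filter
      (fun i => J i = {lst} ∨ (J i)ᶜ = {lst}) with hM
    set A : Finset (Fin n) := Finset.univ.filter (fun t => u t ≠ 0) with hA
    set g : M → Fin n → F := fun i t =>
      if J (i : Fin k) = {lst} then a (i : Fin k) (fun _ => t)
      else b (i : Fin k) (fun _ => t) with hg
    obtain ⟨v, hvA, hvg, hvcard⟩ := aux_exists_v A g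
    set ct : ((Fin (e + 2) → Fin n) → F) → ((Fin (e + 1) → Fin n) → F) :=
      fun f y => ∑ t, v t * f (Fin.snoc y t) with hct
    -- contracted M-terms vanish
    have hMzero : ∀ i ∈ M, ∀ y, ct (c i) y = 0 := by
      intro i hi y
      have hi' : J i = {lst} ∨ (J i)ᶜ = {lst} := by
        rw [hM] at hi; simpa using hi
      rcases hi' with h1 | h2
      · -- a i depends only on {lst}
        have hbconst : ∀ t : Fin n, b i (Fin.snoc y t) = b i (Fin.snoc y (y 0)) := by
          intro t
          apply hb i
          apply aux_snoc_agree
          · intro hmem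
            exfalso
            rw [Finset.mem_compl, h1] at hmem
            exact hmem (Finset.mem_singleton_self _)
          · intro j _
            rfl
        have haval : ∀ t : Fin n, a i (Fin.snoc y t) = g ⟨i, hi⟩ t := by
          intro t
          rw [hg]
          simp only [if_pos h1]
          apply ha i
          intro j hj
          rw [h1, Finset.mem_singleton] at hj
          subst hj
          simp only [hlst, Fin.snoc_last]
        calc ct (c i) y = ∑ t, (v t * g ⟨i, hi⟩ t) * b i (Fin.snoc y (y 0)) := by
              rw [hct]
              apply Finset.sum_congr rfl
              intro t _
              rw [hab i, haval t, hbconst t]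
              ring
          _ = (∑ t, v t * g ⟨i, hi⟩ t) * b i (Fin.snoc y (y 0)) := by
              rw [Finset.sum_mul]
          _ = 0 := by rw [hvg ⟨i, hi⟩]; ring
      · have h1' : J i ≠ {lst} := by
          intro h1
          have := Finset.mem_singleton_self lst
          rw [← h2, Finset.mem_compl, h1] at this
          exact this (Finset.mem_singleton_self _)
        have haconst : ∀ t : Fin n, a i (Fin.snoc y t) = a i (Fin.snoc y (y 0)) := by
          intro t
          apply ha i
          apply aux_snoc_agree
          · intro hmem
            exfalso
            have : lst ∈ (J i)ᶜ := by rw [h2]; exact Finset.mem_singleton_self _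
            rw [Finset.mem_compl] at this
            exact this hmem
          · intro j _
            rfl
        have hbval : ∀ t : Fin n, b i (Fin.snoc y t) = g ⟨i, hi⟩ t := by
          intro t
          rw [hg]
          simp only [if_neg h1']
          apply hb i
          intro j hj
          rw [h2, Finset.mem_singleton] at hj
          subst hj
          simp only [hlst, Fin.snoc_last]
        calc ct (c i) y = ∑ t, (v t * g ⟨i, hi⟩ t) * a i (Fin.snoc y (y 0)) := by
              rw [hct]
              apply Finset.sum_congr rfl
              intro t _
              rw [hab i, haconst t, hbval t]
              ring
          _ = (∑ t, v t * g ⟨i, hi⟩ t) * a i (Fin.snoc y (y 0)) := by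
              rw [Finset.sum_mul]
          _ = 0 := by rw [hvg ⟨i, hi⟩]; ring
    -- contracted non-M terms are partition-rank one
    have hMone : ∀ i : Fin k, i ∉ M → PrRankOne (ct (c i)) := by
      intro i hi
      have hi' : J i ≠ {lst} ∧ (J i)ᶜ ≠ {lst} := by
        rw [hM] at hi
        simp only [Finset.mem_filter, Finset.mem_univ, true_and] at hi
        tauto
      set J' : Finset (Fin (e+1)) :=
        Finset.univ.filter (fun j => j.castSucc ∈ J i) with hJ'
      have hmemJ' : ∀ j : Fin (e+1), j ∈ J' ↔ j.castSucc ∈ J i := by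
        intro j; rw [hJ']; simp
      have hcast : ∀ j : Fin (e+2), j ≠ lst → ∃ j' : Fin (e+1), j'.castSucc = j := by
        intro j hne
        have hlt : (j : ℕ) < e + 1 := by
          rcases Nat.lt_succ_iff_lt_or_eq.mp j.isLt with h | h
          · exact h
          · exact absurd (Fin.ext h) hne
        exact ⟨⟨j, hlt⟩, Fin.ext rfl⟩
      by_cases hl : lst ∈ J i
      · -- last coordinate in J i
        have hne : J'.Nonempty := by
          have : ∃ j ∈ J i, j ≠ lst := by
            by_contra h
            push_neg at h
            apply hi'.1
            apply Finset.eq_singleton_iff_unique_mem.mpr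
            exact ⟨hl, h⟩
          obtain ⟨j, hjmem, hjne⟩ := this
          obtain ⟨j', rfl⟩ := hcast j hjne
          exact ⟨j', (hmemJ' j').mpr hjmem⟩
        have hnuniv : J' ≠ Finset.univ := by
          intro hJu
          apply hJuniv i
          apply Finset.eq_univ_of_forall
          intro j
          induction j using Fin.lastCases with
          | last => exact hl
          | cast j' =>
            have : j' ∈ J' := hJu ▸ Finset.mem_univ j'
            exact (hmemJ' j').mp this
        refine ⟨J', hne, hnuniv,
          (fun y => ∑ t, v t * a i (Fin.snoc y t)),
          (fun y => b i (Fin.snoc y (y 0))), ?_, ?_, ?_⟩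
        · intro x z hxz
          apply Finset.sum_congr rfl
          intro t _
          congr 1
          apply ha i
          apply aux_snoc_agree
          · intro _; rfl
          · intro j hj
            exact hxz j ((hmemJ' j).mpr hj)
        · intro x z hxz
          apply hb i
          apply aux_snoc_agree
          · intro hmem
            exact absurd hl (Finset.mem_compl.mp hmem)
          · intro j hj
            apply hxz
            rw [Finset.mem_compl, hmemJ']
            exact Finset.mem_compl.mp hj
        · intro y
          have hbconst : ∀ t : Fin n, b i (Fin.snoc y t) = b i (Fin.snoc y (y 0)) := by
            intro t
            apply hb i
            apply aux_snoc_agree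
            · intro hmem
              exact absurd hl (Finset.mem_compl.mp hmem)
            · intro j _; rfl
          calc ct (c i) y = ∑ t, (v t * a i (Fin.snoc y t)) * b i (Fin.snoc y (y 0)) := by
                rw [hct]
                apply Finset.sum_congr rfl
                intro t _
                rw [hab i, hbconst t]
                ring
            _ = _ := by rw [Finset.sum_mul]
      · -- last coordinate in (J i)ᶜ
        have hlc : lst ∈ (J i)ᶜ := Finset.mem_compl.mpr hl
        have hne : J'.Nonempty := by
          obtain ⟨j, hjmem⟩ := hJne i
          have hjne : j ≠ lst := fun h => hl (h ▸ hjmem)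
          obtain ⟨j', rfl⟩ := hcast j hjne
          exact ⟨j', (hmemJ' j').mpr hjmem⟩
        have hnuniv : J' ≠ Finset.univ := by
          have : ∃ j ∈ (J i)ᶜ, j ≠ lst := by
            by_contra h
            push_neg at h
            apply hi'.2
            apply Finset.eq_singleton_iff_unique_mem.mpr
            exact ⟨hlc, h⟩
          obtain ⟨j, hjmem, hjne⟩ := this
          obtain ⟨j', rfl⟩ := hcast j hjne
          intro hJu
          have : j' ∈ J' := hJu ▸ Finset.mem_univ j'
          exact (Finset.mem_compl.mp hjmem) ((hmemJ' j').mp this)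
        refine ⟨J', hne, hnuniv,
          (fun y => a i (Fin.snoc y (y 0))),
          (fun y => ∑ t, v t * b i (Fin.snoc y t)), ?_, ?_, ?_⟩
        · intro x z hxz
          apply ha i
          apply aux_snoc_agree
          · intro hmem
            exact absurd hmem hl
          · intro j hj
            exact hxz j ((hmemJ' j).mpr hj)
        · intro x z hxz
          apply Finset.sum_congr rfl
          intro t _
          congr 1
          apply hb i
          apply aux_snoc_agree
          · intro _; rfl
          · intro j hj
            apply hxz
            rw [Finset.mem_compl, hmemJ']
            exact Finset.mem_compl.mp hj
        · intro y
          have haconst : ∀ t : Fin n, a i (Fin.snoc y t) = a i (Fin.snoc y (y 0)) := by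
            intro t
            apply ha i
            apply aux_snoc_agree
            · intro hmem
              exact absurd hmem hl
            · intro j _; rfl
          calc ct (c i) y = ∑ t, a i (Fin.snoc y (y 0)) * (v t * b i (Fin.snoc y t)) := by
                rw [hct]
                apply Finset.sum_congr rfl
                intro t _
                rw [hab i, haconst t]
                ring
            _ = _ := by rw [← Finset.mul_sum]
    -- sum identity
    have hsum : ∀ y : Fin (e+1) → Fin n,
        (if ∀ j₁ j₂ : Fin (e + 1), y j₁ = y j₂ then v (y 0) * u (y 0) else 0)
          = ∑ i : Fin k, ct (c i) y := by
      intro y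
      rw [← aux_contract_wdiag v u y]
      rw [hct]
      rw [Finset.sum_comm]
      apply Finset.sum_congr rfl
      intro t _
      rw [← Finset.mul_sum, ← hc2 (Fin.snoc y t)]
    -- the contracted tensor has rank at most Mᶜ.card
    have hdec : PrRankLE (fun y : Fin (e + 1) → Fin n =>
        if ∀ j₁ j₂ : Fin (e + 1), y j₁ = y j₂ then v (y 0) * u (y 0) else 0) Mᶜ.card := by
      set E := (Mᶜ : Finset (Fin k)).equivFin with hE
      refine ⟨fun i => ct (c ((E.symm i : ↥(Mᶜ : Finset (Fin k))) : Fin k)), ?_, ?_⟩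
      · intro i
        apply hMone
        have := (E.symm i).2
        rw [Finset.mem_compl] at this
        exact this
      · intro y
        have h1 : ∑ i : Fin k, ct (c i) y
            = ∑ i ∈ M, ct (c i) y + ∑ i ∈ Mᶜ, ct (c i) y :=
          (Finset.sum_add_sum_compl M _).symm
        have h2 : ∑ i ∈ M, ct (c i) y = 0 :=
          Finset.sum_eq_zero (fun i hi => hMzero i hi y)
        have h3 : ∑ i : Fin Mᶜ.card, ct (c ((E.symm i : ↥(Mᶜ : Finset (Fin k))) : Fin k)) y
            = ∑ i ∈ Mᶜ, ct (c i) y := by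
          rw [← Finset.sum_coe_sort (Mᶜ : Finset (Fin k)) (fun i => ct (c i) y)]
          exact Equiv.sum_comp E.symm (fun j => ct (c (j : Fin k)) y)
        exact (hsum y).trans (by rw [h1, h2, zero_add, ← h3])
    have hfin := ih (fun t => v t * u t) Mᶜ.card hdec
    have hsupp : (Finset.univ.filter fun t => v t * u t ≠ 0)
        = (Finset.univ.filter fun t => v t ≠ 0) := by
      ext t
      simp only [Finset.mem_filter, Finset.mem_univ, true_and]
      constructor
      · intro h h0
        exact h (by rw [h0, zero_mul])
      · intro h
        have htA := hvA t h
        have hu : u t ≠ 0 := by rw [hA] at htA; simpa using htA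
        exact mul_ne_zero h hu
    rw [hsupp] at hfin
    have hMk : M.card + Mᶜ.card = k := by
      have := Finset.card_add_card_compl M
      simpa using this
    have hMcard : Fintype.card M = M.card := Fintype.card_coe M
    omega

theorem partition_rank_identity {d n : ℕ} (hd : 2 ≤ d) (hn : 1 ≤ n) :
    PrRankLE (fun x : Fin d → Fin n =>
        if ∀ j₁ j₂ : Fin d, x j₁ = x j₂ then (1 : F) else 0) n ∧
    ∀ k : ℕ, PrRankLE (fun x : Fin d → Fin n =>
        if ∀ j₁ j₂ : Fin d, x j₁ = x j₂ then (1 : F) else 0) k → n ≤ k := by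
  classical
  obtain ⟨e, rfl⟩ : ∃ e, d = e + 2 := ⟨d - 2, by omega⟩
  constructor
  · -- upper bound
    refine ⟨fun t x => (if x 0 = t then (1 : F) else 0) *
      (if ∀ j ∈ ({0} : Finset (Fin (e + 2)))ᶜ, x j = t then (1 : F) else 0), ?_, ?_⟩
    · intro t
      refine ⟨{0}, Finset.singleton_nonempty _, ?_,
        (fun x => if x 0 = t then (1 : F) else 0),
        (fun x => if ∀ j ∈ ({0} : Finset (Fin (e + 2)))ᶜ, x j = t then (1 : F) else 0),
        ?_, ?_, fun x => rfl⟩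
      · intro h
        have h1 : (1 : Fin (e + 2)) ∈ ({0} : Finset (Fin (e + 2))) := h ▸ Finset.mem_univ _
        rw [Finset.mem_singleton] at h1
        exact absurd (congrArg Fin.val h1) (by simp)
      · intro x y hxy
        show (if x 0 = t then (1 : F) else 0) = (if y 0 = t then (1 : F) else 0)
        rw [hxy 0 (Finset.mem_singleton_self 0)]
      · intro x y hxy
        show (if ∀ j ∈ ({0} : Finset (Fin (e + 2)))ᶜ, x j = t then (1 : F) else 0)
          = (if ∀ j ∈ ({0} : Finset (Fin (e + 2)))ᶜ, y j = t then (1 : F) else 0)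
        have : (∀ j ∈ ({0} : Finset (Fin (e + 2)))ᶜ, x j = t) ↔
            (∀ j ∈ ({0} : Finset (Fin (e + 2)))ᶜ, y j = t) := by
          constructor
          · intro h j hj; rw [← hxy j hj]; exact h j hj
          · intro h j hj; rw [hxy j hj]; exact h j hj
        simp only [this]
    · intro x
      show (if ∀ j₁ j₂ : Fin (e + 2), x j₁ = x j₂ then (1 : F) else 0)
        = ∑ t : Fin n, (if x 0 = t then (1 : F) else 0) *
            (if ∀ j ∈ ({0} : Finset (Fin (e + 2)))ᶜ, x j = t then (1 : F) else 0)
      by_cases hx : ∀ j₁ j₂ : Fin (e + 2), x j₁ = x j₂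
      · rw [if_pos hx]
        have hterm : ∀ t : Fin n,
            (if x 0 = t then (1 : F) else 0) *
              (if ∀ j ∈ ({0} : Finset (Fin (e + 2)))ᶜ, x j = t then (1 : F) else 0)
            = if x 0 = t then (1 : F) else 0 := by
          intro t
          by_cases ht : x 0 = t
          · rw [if_pos ht, if_pos, one_mul]
            intro j _
            rw [hx j 0]; exact ht
          · rw [if_neg ht, zero_mul]
        rw [Finset.sum_congr rfl (fun t _ => hterm t)]
        simp
      · rw [if_neg hx]
        symm
        apply Finset.sum_eq_zero
        intro t _
        push_neg at hx
        obtain ⟨j₁, j₂, hne⟩ := hx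
        by_cases h1 : x 0 = t
        · rw [if_pos h1]
          rw [if_neg, mul_zero]
          intro hall
          apply hne
          have hx0 : ∀ j : Fin (e + 2), x j = t := by
            intro j
            by_cases hj : j = 0
            · rw [hj]; exact h1
            · exact hall j (by simp [hj])
          rw [hx0 j₁, hx0 j₂]
        · rw [if_neg h1, zero_mul]
  · -- lower bound
    intro k hk
    have := aux_key (F := F) (n := n) (e + 1) (fun _ => (1 : F)) k hk
    have hcard : (Finset.univ.filter fun t : Fin n => (1 : F) ≠ 0).card = n := by
      rw [Finset.filter_true_of_mem (fun _ _ => one_ne_zero)]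
      simp
    rwa [hcard] at this
end

section
/- Let d ≥ 2, let R be a non-empty family of partitions of [d], and let P be a partition of [d] such that some part J₀ ∈ P is not contained in any part of any partition in R. Then Δ_P : [n]^d → 𝔽 has R-rank at least n. -/
open Finset

variable {F : Type*} [Field F]

omit [Field F] in
lemma DependsOnlyOn.mono {d : ℕ} {n : Fin d → ℕ} {f : (∀ j, Fin (n j)) → F}
    {J K : Finset (Fin d)} (h : DependsOnlyOn f J) (hJK : J ⊆ K) : DependsOnlyOn f K :=
  fun x y hxy => h x y fun j hj => hxy j (hJK hj)

noncomputable def Diag {d n : ℕ} (S : Finset (Fin d)) (c : Fin n → F) :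
    (Fin d → Fin n) → F :=
  fun x => ∑ v : Fin n, (if ∀ j ∈ S, x j = v then c v else 0)

open Classical in
lemma exists_mem_support_card_ge (X : Type*) [Fintype X] [DecidableEq X]
    (W : Submodule F (X → F)) :
    ∃ h ∈ W, Module.finrank F ↥W ≤ (Finset.univ.filter fun x => h x ≠ 0).card := by
  classical
  have huniv : ∀ w ∈ W, (∀ b ∈ (Finset.univ : Finset X), w b = 0) → w = 0 := by
    intro w _ hw
    funext x; exact hw x (mem_univ x)
  obtain ⟨B, hBmem, hBmin⟩ := Finset.exists_min_image
    ((Finset.univ : Finset X).powerset.filter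
      (fun B => ∀ w ∈ W, (∀ b ∈ B, w b = 0) → w = 0)) Finset.card
    ⟨Finset.univ, Finset.mem_filter.mpr ⟨Finset.mem_powerset.mpr le_rfl, huniv⟩⟩
  have hBGood : ∀ w ∈ W, (∀ b ∈ B, w b = 0) → w = 0 := (Finset.mem_filter.mp hBmem).2
  -- rank bound via injective restriction
  have hrank : Module.finrank F ↥W ≤ B.card := by
    have hinj : Function.Injective
        (((LinearMap.funLeft F F (fun b : ↥B => (b : X))).comp W.subtype)) := by
      rw [← LinearMap.ker_eq_bot, LinearMap.ker_eq_bot']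
      intro w hw
      have : (w : X → F) = 0 := by
        apply hBGood w w.2
        intro b hb
        have := congrFun hw ⟨b, hb⟩
        simpa using this
      exact Subtype.ext this
    calc Module.finrank F ↥W ≤ Module.finrank F (↥B → F) :=
          LinearMap.finrank_le_finrank_of_injective hinj
      _ = B.card := by simp [Module.finrank_pi]
  -- minimality gives witnesses
  have hwit : ∀ b ∈ B, ∃ w : X → F, w ∈ W ∧ (∀ b' ∈ B.erase b, w b' = 0) ∧ w b ≠ 0 := by
    intro b hb
    have hnotgood : ¬ ∀ w ∈ W, (∀ b' ∈ B.erase b, w b' = 0) → w = 0 := by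
      intro hg
      have hmem : B.erase b ∈ ((Finset.univ : Finset X).powerset.filter
          (fun B => ∀ w ∈ W, (∀ b ∈ B, w b = 0) → w = 0)) :=
        Finset.mem_filter.mpr ⟨Finset.mem_powerset.mpr (fun x _ => mem_univ x), hg⟩
      have := hBmin _ hmem
      have hlt : (B.erase b).card < B.card := Finset.card_erase_lt_of_mem hb
      omega
    push_neg at hnotgood
    obtain ⟨w, hwW, hw0, hwne⟩ := hnotgood
    refine ⟨w, hwW, hw0, ?_⟩
    intro hwb
    apply hwne
    apply hBGood w hwW
    intro b' hb'
    by_cases hbb : b' = b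
    · rw [hbb]; exact hwb
    · exact hw0 b' (Finset.mem_erase.mpr ⟨hbb, hb'⟩)
  choose w hwW hw0 hwne using hwit
  set h : X → F := ∑ b ∈ B.attach, (w b b.2 b)⁻¹ • w b b.2 with hh
  have hhW : h ∈ W := by
    apply Submodule.sum_mem
    intro b _
    exact Submodule.smul_mem _ _ (hwW b b.2)
  have hhB : ∀ b ∈ B, h b = 1 := by
    intro b hb
    have hb' : h b = ∑ c ∈ B.attach, (w c c.2 c)⁻¹ * w c c.2 b := by
      rw [hh]; simp [Finset.sum_apply]
    rw [hb']
    rw [Finset.sum_eq_single (⟨b, hb⟩ : {x // x ∈ B})]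
    · exact inv_mul_cancel₀ (hwne b hb)
    · intro c _ hcb
      have : w c c.2 b = 0 := by
        apply hw0 c c.2
        refine Finset.mem_erase.mpr ⟨?_, hb⟩
        intro hbc; apply hcb; exact Subtype.ext hbc.symm
      simp [this]
    · intro hmem; exact absurd (Finset.mem_attach _ _) hmem
  refine ⟨h, hhW, le_trans hrank (Finset.card_le_card ?_)⟩
  intro b hb
  simp only [Finset.mem_filter, Finset.mem_univ, true_and]
  rw [hhB b hb]
  exact one_ne_zero

lemma diag_rank_aux {d n : ℕ} {ι : Type} (m : ℕ) :
    ∀ (S : Finset (Fin d)), S.card = m → S.Nonempty →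
    ∀ (I : Finset ι) (c : Fin n → F)
      (f g : ι → (Fin d → Fin n) → F) (A : ι → Finset (Fin d)),
      (∀ i ∈ I, (A i).Nonempty ∧ A i ⊆ S ∧ A i ≠ S ∧
        DependsOnlyOn (f i) (A i) ∧ DependsOnlyOn (g i) (S \ A i)) →
      (∀ x, Diag S c x = ∑ i ∈ I, f i x * g i x) →
      ∀ (D : Finset (Fin n)), (∀ v ∈ D, c v ≠ 0) → D.card ≤ I.card := by
  classical
  induction m using Nat.strong_induction_on with
  | _ m IH =>
  intro S hcard hS I c f g A hA hsum D hD
  by_cases hm1 : S.card ≤ 1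
  · -- base case: S is a singleton, no valid terms, c = 0
    have hI : I = ∅ := by
      rw [Finset.eq_empty_iff_forall_notMem]
      intro i hi
      obtain ⟨hne, hsub, hneS, _, _⟩ := hA i hi
      exact hneS (Finset.eq_of_subset_of_card_le hsub (le_trans hm1 (Finset.card_pos.mpr hne)))
    obtain ⟨j₀, hj₀⟩ := hS
    have hzero : ∀ v, c v = 0 := by
      intro v
      have h1 := hsum (fun _ => v)
      rw [hI, Finset.sum_empty] at h1
      have h2 : Diag S c (fun _ => v) = c v := by
        rw [Diag]
        have : ∀ w : Fin n, (if ∀ j ∈ S, v = w then c w else 0)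
            = if w = v then c w else 0 := by
          intro w
          refine if_congr ⟨fun hw => (hw j₀ hj₀).symm, fun hw j _ => hw.symm⟩ rfl rfl
        rw [Finset.sum_congr rfl fun w _ => this w, Finset.sum_ite_eq' Finset.univ v c,
          if_pos (Finset.mem_univ v)]
      rw [h2] at h1
      exact h1
    have hDe : D = ∅ := by
      rw [Finset.eq_empty_iff_forall_notMem]
      intro v hv
      exact hD v hv (hzero v)
    rw [hDe]
    simp
  · -- inductive step
    push_neg at hm1
    obtain ⟨s, hs⟩ := hS
    -- swap so that s ∈ A' i always
    set A' : ι → Finset (Fin d) := fun i => if s ∈ A i then A i else S \ A i with hA'def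
    set f' : ι → (Fin d → Fin n) → F := fun i => if s ∈ A i then f i else g i with hf'def
    set g' : ι → (Fin d → Fin n) → F := fun i => if s ∈ A i then g i else f i with hg'def
    have hA' : ∀ i ∈ I, s ∈ A' i ∧ (A' i).Nonempty ∧ A' i ⊆ S ∧ A' i ≠ S ∧
        DependsOnlyOn (f' i) (A' i) ∧ DependsOnlyOn (g' i) (S \ A' i) := by
      intro i hi
      obtain ⟨hne, hsub, hneS, hf, hg⟩ := hA i hi
      by_cases hsi : s ∈ A i
      · simp only [hA'def, hf'def, hg'def, if_pos hsi]
        exact ⟨hsi, hne, hsub, hneS, hf, hg⟩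
      · simp only [hA'def, hf'def, hg'def, if_neg hsi]
        obtain ⟨a, haA⟩ := hne
        refine ⟨Finset.mem_sdiff.mpr ⟨hs, hsi⟩, ⟨s, Finset.mem_sdiff.mpr ⟨hs, hsi⟩⟩,
          Finset.sdiff_subset, ?_, hg, ?_⟩
        · intro heq
          have haS : a ∈ S \ A i := by rw [heq]; exact hsub haA
          exact (Finset.mem_sdiff.mp haS).2 haA
        · refine hf.mono ?_
          intro b hb
          exact Finset.mem_sdiff.mpr ⟨hsub hb, fun hb' => (Finset.mem_sdiff.mp hb').2 hb⟩
    have hsum' : ∀ x, Diag S c x = ∑ i ∈ I, f' i x * g' i x := by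
      intro x
      rw [hsum x]
      refine Finset.sum_congr rfl fun i hi => ?_
      by_cases hsi : s ∈ A i
      · simp only [hf'def, hg'def, if_pos hsi]
      · simp only [hf'def, hg'def, if_neg hsi]; ring
    clear hsum hA
    set g1 : Finset ι := I.filter (fun i => A' i = {s}) with hg1def
    set G2 : Finset ι := I.filter (fun i => ¬ A' i = {s}) with hG2def
    set φ : ι → Fin n → F := fun i v => f' i (fun _ => v) with hφdef
    have hφ : ∀ i ∈ g1, ∀ x : Fin d → Fin n, f' i x = φ i (x s) := by
      intro i hi x
      obtain ⟨hiI, hieq⟩ := Finset.mem_filter.mp hi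
      have := (hA' i hiI).2.2.2.2.1
      rw [hieq] at this
      exact this x (fun _ => x s) (fun j hj => by
        rw [Finset.mem_singleton] at hj; rw [hj])
    -- the linear map
    set L : (↥D → F) →ₗ[F] (↥g1 → F) :=
      LinearMap.pi (fun i => ∑ v : ↥D, φ (↑i) (↑v) • LinearMap.proj v) with hLdef
    have hLapp : ∀ (h₀ : ↥D → F) (i : ↥g1), L h₀ i = ∑ v : ↥D, φ (↑i) (↑v) * h₀ v := by
      intro h₀ i
      simp [hLdef, LinearMap.pi_apply, LinearMap.sum_apply, LinearMap.smul_apply,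
        LinearMap.proj_apply, smul_eq_mul]
    have hkerrank : D.card ≤ Module.finrank F ↥(LinearMap.ker L) + g1.card := by
      have h1 := LinearMap.finrank_range_add_finrank_ker L
      have h2 : Module.finrank F (↥D → F) = D.card := by
        simp [Module.finrank_pi]
      have h3 : Module.finrank F ↥(LinearMap.range L) ≤ g1.card := by
        calc Module.finrank F ↥(LinearMap.range L) ≤ Module.finrank F (↥g1 → F) :=
              Submodule.finrank_le _
          _ = g1.card := by simp [Module.finrank_pi]
      omega
    obtain ⟨h₀, hh₀ker, hh₀supp⟩ := exists_mem_support_card_ge ↥D (LinearMap.ker L)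
    set h : Fin n → F := fun v => if hv : v ∈ D then h₀ ⟨v, hv⟩ else 0 with hhdef
    set c' : Fin n → F := fun v => h v * c v with hc'def
    have hL0 : ∀ i ∈ g1, ∑ v : Fin n, h v * φ i v = 0 := by
      intro i hi
      have e1 : ∑ v : Fin n, h v * φ i v = ∑ v ∈ D, h v * φ i v := by
        refine (Finset.sum_subset (Finset.subset_univ D) ?_).symm
        intro v _ hv
        rw [hhdef]; simp [dif_neg hv]
      have e2 : ∑ v ∈ D, h v * φ i v = ∑ v : ↥D, φ i (↑v) * h₀ v := by
        rw [← Finset.sum_attach D (fun v => h v * φ i v)]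
        refine Finset.sum_congr rfl fun v _ => ?_
        rw [hhdef]
        simp [dif_pos v.2, mul_comm]
      rw [e1, e2, ← hLapp h₀ ⟨i, hi⟩]
      rw [LinearMap.mem_ker] at hh₀ker
      rw [hh₀ker]
      rfl
    -- new data
    set f'' : ι → (Fin d → Fin n) → F :=
      fun i x => ∑ v : Fin n, h v * f' i (Function.update x s v) with hf''def
    set A'' : ι → Finset (Fin d) := fun i => (A' i).erase s with hA''def
    -- contraction identity
    have step1 : ∀ x : Fin d → Fin n,
        ∑ v : Fin n, h v * Diag S c (Function.update x s v) = Diag (S.erase s) c' x := by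
      intro x
      have e1 : ∀ v : Fin n, h v * Diag S c (Function.update x s v)
          = ∑ w : Fin n, if v = w then
              (if ∀ j ∈ S.erase s, x j = w then h v * c w else 0) else 0 := by
        intro v
        rw [Diag, Finset.mul_sum]
        refine Finset.sum_congr rfl fun w _ => ?_
        rw [mul_ite, mul_zero, ← ite_and]
        refine if_congr ?_ rfl rfl
        constructor
        · intro hcond
          constructor
          · have := hcond s hs; rwa [Function.update_self] at this
          · intro j hj
            obtain ⟨hjs, hjS⟩ := Finset.mem_erase.mp hj
            have := hcond j hjS; rwa [Function.update_of_ne hjs] at this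
        · rintro ⟨rfl, hq⟩ j hj
          by_cases hjs : j = s
          · subst hjs; rw [Function.update_self]
          · rw [Function.update_of_ne hjs]; exact hq j (Finset.mem_erase.mpr ⟨hjs, hj⟩)
      rw [Finset.sum_congr rfl fun v _ => e1 v, Finset.sum_comm, Diag]
      refine Finset.sum_congr rfl fun w _ => ?_
      rw [Finset.sum_ite_eq' Finset.univ w, if_pos (Finset.mem_univ w)]
    have step2 : ∀ x : Fin d → Fin n,
        Diag (S.erase s) c' x = ∑ i ∈ G2, f'' i x * g' i x := by
      intro x
      rw [← step1 x]
      have e1 : ∀ v : Fin n, h v * Diag S c (Function.update x s v)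
          = ∑ i ∈ I, h v * (f' i (Function.update x s v) * g' i x) := by
        intro v
        rw [hsum' (Function.update x s v), Finset.mul_sum]
        refine Finset.sum_congr rfl fun i hi => ?_
        have hg'i := (hA' i hi).2.2.2.2.2
        have : g' i (Function.update x s v) = g' i x := by
          refine hg'i _ _ fun j hj => ?_
          have hjs : j ≠ s := by
            intro hjs; subst hjs
            exact (Finset.mem_sdiff.mp hj).2 (hA' i hi).1
          rw [Function.update_of_ne hjs]
        rw [this]
      rw [Finset.sum_congr rfl fun v _ => e1 v, Finset.sum_comm]
      have e2 : ∀ i ∈ I, ∑ v : Fin n, h v * (f' i (Function.update x s v) * g' i x)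
          = f'' i x * g' i x := by
        intro i hi
        rw [hf''def, Finset.sum_mul]
        refine Finset.sum_congr rfl fun v _ => ?_
        ring
      rw [Finset.sum_congr rfl fun i hi => e2 i hi]
      rw [← Finset.sum_filter_add_sum_filter_not I (fun i => A' i = {s})
        (fun i => f'' i x * g' i x), ← hg1def, ← hG2def]
      have e3 : ∀ i ∈ g1, f'' i x * g' i x = 0 := by
        intro i hi
        have : f'' i x = 0 := by
          rw [hf''def]
          have : ∀ v : Fin n, f' i (Function.update x s v) = φ i v := by
            intro v
            rw [hφ i hi (Function.update x s v), Function.update_self]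
          simp only [this]
          exact hL0 i hi
        rw [this, zero_mul]
      rw [Finset.sum_eq_zero e3, zero_add]
    -- apply IH
    have hScard : (S.erase s).card = m - 1 := by
      rw [Finset.card_erase_of_mem hs, hcard]
    have hSne : (S.erase s).Nonempty := by
      rw [← Finset.card_pos, hScard]
      omega
    set D' : Finset (Fin n) :=
      (Finset.univ.filter fun v : ↥D => h₀ v ≠ 0).image Subtype.val with hD'def
    have hD'card : D'.card = (Finset.univ.filter fun v : ↥D => h₀ v ≠ 0).card := by
      rw [hD'def]
      exact Finset.card_image_of_injective
        (Finset.univ.filter fun v : ↥D => h₀ v ≠ 0) Subtype.val_injective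
    have hD'ne : ∀ v ∈ D', c' v ≠ 0 := by
      intro v hv
      simp only [hD'def, Finset.mem_image, Finset.mem_filter, Finset.mem_univ,
        true_and] at hv
      obtain ⟨w, hw0, rfl⟩ := hv
      rw [hc'def]
      simp only
      apply mul_ne_zero
      · rw [hhdef]; simp only [dif_pos w.2]; exact hw0
      · exact hD _ w.2
    have hIH := IH (m - 1) (by omega) (S.erase s) hScard hSne G2 c' f'' g' A''
    have hcond : ∀ i ∈ G2, (A'' i).Nonempty ∧ A'' i ⊆ S.erase s ∧ A'' i ≠ S.erase s ∧
        DependsOnlyOn (f'' i) (A'' i) ∧ DependsOnlyOn (g' i) (S.erase s \ A'' i) := by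
      intro i hi
      obtain ⟨hiI, hine⟩ := Finset.mem_filter.mp hi
      obtain ⟨hsA, hne, hsub, hneS, hf, hg⟩ := hA' i hiI
      refine ⟨?_, ?_, ?_, ?_, ?_⟩
      · -- nonempty
        by_contra hemp
        rw [Finset.not_nonempty_iff_eq_empty] at hemp
        apply hine
        apply Finset.eq_singleton_iff_unique_mem.mpr
        refine ⟨hsA, fun t ht => ?_⟩
        by_contra hts
        have : t ∈ (A' i).erase s := Finset.mem_erase.mpr ⟨hts, ht⟩
        rw [hA''def] at hemp
        simp only at hemp
        rw [hemp] at this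
        exact absurd this (Finset.notMem_empty t)
      · exact Finset.erase_subset_erase s hsub
      · intro heq
        apply hneS
        have h1 : A' i = insert s ((A' i).erase s) := (Finset.insert_erase hsA).symm
        have h2 : S = insert s (S.erase s) := (Finset.insert_erase hs).symm
        rw [h1, h2]
        rw [hA''def] at heq
        simp only at heq
        rw [heq]
      · intro x y hxy
        rw [hf''def]
        simp only
        refine Finset.sum_congr rfl fun v _ => ?_
        congr 1
        refine hf _ _ fun j hj => ?_
        by_cases hjs : j = s
        · subst hjs; rw [Function.update_self, Function.update_self]
        · rw [Function.update_of_ne hjs, Function.update_of_ne hjs]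
          exact hxy j (by rw [hA''def]; exact Finset.mem_erase.mpr ⟨hjs, hj⟩)
      · refine hg.mono ?_
        intro j hj
        obtain ⟨hjS, hjA⟩ := Finset.mem_sdiff.mp hj
        have hjs : j ≠ s := fun hjs => hjA (hjs ▸ hsA)
        refine Finset.mem_sdiff.mpr ⟨Finset.mem_erase.mpr ⟨hjs, hjS⟩, ?_⟩
        rw [hA''def]
        simp only
        intro hmem
        exact hjA (Finset.mem_of_mem_erase hmem)
    have hIH2 := hIH hcond step2 D' hD'ne
    have hg1G2 : g1.card + G2.card = I.card := by
      rw [hg1def, hG2def]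
      exact Finset.card_filter_add_card_filter_not _
    omega

theorem deltaP_lower_bound_uncovered_part {d n : ℕ} (hd : 2 ≤ d) (hn : 1 ≤ n)
    (P : Finset (Finset (Fin d))) (R : Finset (Finset (Finset (Fin d))))
    (hP : IsPartitionOn d P) (hR : IsPartitionFamily d R)
    (J₀ : Finset (Fin d)) (hJ₀ : J₀ ∈ P)
    (huncov : ∀ Q ∈ R, ∀ K ∈ Q, ¬ J₀ ⊆ K) (k : ℕ)
    (h : RRankLE (n := fun _ => n) R (DeltaP P : (Fin d → Fin n) → F) k) :
    n ≤ k := by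
  classical
  obtain ⟨c, hc1, hcsum⟩ := h
  choose Q hQR a ha hae using hc1
  obtain ⟨j₀, hj₀⟩ := hP.1 J₀ hJ₀
  have hK : ∀ i : Fin k, ∃ K, K ∈ Q i ∧ j₀ ∈ K := by
    intro i
    have hQi := hR.2 (Q i) (hQR i)
    have hmem : j₀ ∈ (Q i).sup id := by rw [hQi.2.2]; exact mem_univ _
    rw [Finset.mem_sup] at hmem
    obtain ⟨K, hKQ, hjK⟩ := hmem
    exact ⟨K, hKQ, hjK⟩
  choose K hKQ hjK using hK
  set z : Fin n := ⟨0, hn⟩ with hzdef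
  set ρ : (Fin d → Fin n) → (Fin d → Fin n) :=
    fun x j => if j ∈ J₀ then x j else z with hρdef
  set A : Fin k → Finset (Fin d) := fun i => K i ∩ J₀ with hAdef
  set f : Fin k → (Fin d → Fin n) → F := fun i x => a i (K i) (ρ x) with hfdef
  set g : Fin k → (Fin d → Fin n) → F :=
    fun i x => ∏ J ∈ (Q i).erase (K i), a i J (ρ x) with hgdef
  -- the key identity
  have key : ∀ x : Fin d → Fin n,
      Diag J₀ (fun _ => (1:F)) x = ∑ i ∈ (univ : Finset (Fin k)), f i x * g i x := by
    intro x
    have hCiff : (∀ J ∈ P, ∀ j₁ ∈ J, ∀ j₂ ∈ J, ρ x j₁ = ρ x j₂)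
        ↔ (∀ j₁ ∈ J₀, ∀ j₂ ∈ J₀, x j₁ = x j₂) := by
      constructor
      · intro hC j₁ h₁ j₂ h₂
        have := hC J₀ hJ₀ j₁ h₁ j₂ h₂
        simpa only [hρdef, if_pos h₁, if_pos h₂] using this
      · intro hC J hJP j₁ h₁ j₂ h₂
        by_cases hJJ : J = J₀
        · subst hJJ
          rw [hρdef]; simp only [if_pos h₁, if_pos h₂]
          exact hC j₁ h₁ j₂ h₂
        · have hdisj := hP.2.1 J hJP J₀ hJ₀ hJJ
          have hn₁ : j₁ ∉ J₀ := fun hmem => (Finset.disjoint_left.mp hdisj h₁) hmem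
          have hn₂ : j₂ ∉ J₀ := fun hmem => (Finset.disjoint_left.mp hdisj h₂) hmem
          rw [hρdef]; simp only [if_neg hn₁, if_neg hn₂]
    have hL : Diag J₀ (fun _ => (1:F)) x = DeltaP P (ρ x) := by
      rw [DeltaP, Diag]
      by_cases hC : ∀ j₁ ∈ J₀, ∀ j₂ ∈ J₀, x j₁ = x j₂
      · rw [if_pos (hCiff.mpr hC)]
        have e : ∀ v : Fin n, (if ∀ j ∈ J₀, x j = v then (1:F) else 0)
            = if v = x j₀ then 1 else 0 := by
          intro v
          refine if_congr ⟨fun hv => (hv j₀ hj₀).symm, fun hv j hj => ?_⟩ rfl rfl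
          rw [hv]; exact hC j hj j₀ hj₀
        rw [Finset.sum_congr rfl fun v _ => e v,
          Finset.sum_ite_eq' Finset.univ (x j₀) (fun _ => (1:F)),
          if_pos (Finset.mem_univ _)]
      · rw [if_neg (fun hC' => hC (hCiff.mp hC'))]
        refine Finset.sum_eq_zero fun v _ => ?_
        rw [if_neg]
        intro hv
        exact hC fun j₁ h₁ j₂ h₂ => by rw [hv j₁ h₁, hv j₂ h₂]
    rw [hL, hcsum (ρ x)]
    refine Finset.sum_congr rfl fun i _ => ?_
    rw [hae i (ρ x), hfdef, hgdef]
    exact (Finset.mul_prod_erase (Q i) (fun J => a i J (ρ x)) (hKQ i)).symm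
  -- conditions
  have hcond : ∀ i ∈ (univ : Finset (Fin k)), (A i).Nonempty ∧ A i ⊆ J₀ ∧ A i ≠ J₀ ∧
      DependsOnlyOn (f i) (A i) ∧ DependsOnlyOn (g i) (J₀ \ A i) := by
    intro i _
    have hQi := hR.2 (Q i) (hQR i)
    refine ⟨⟨j₀, Finset.mem_inter.mpr ⟨hjK i, hj₀⟩⟩, Finset.inter_subset_right, ?_, ?_, ?_⟩
    · intro heq
      apply huncov (Q i) (hQR i) (K i) (hKQ i)
      intro t ht
      have : t ∈ K i ∩ J₀ := by rw [hAdef] at heq; simp only at heq; rw [heq]; exact ht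
      exact (Finset.mem_inter.mp this).1
    · intro x y hxy
      rw [hfdef]
      refine ha i (K i) (hKQ i) _ _ fun j hj => ?_
      rw [hρdef]
      simp only
      by_cases hjJ : j ∈ J₀
      · rw [if_pos hjJ, if_pos hjJ]
        exact hxy j (by rw [hAdef]; exact Finset.mem_inter.mpr ⟨hj, hjJ⟩)
      · rw [if_neg hjJ, if_neg hjJ]
    · intro x y hxy
      rw [hgdef]
      refine Finset.prod_congr rfl fun J hJ => ?_
      have hJQ : J ∈ Q i := Finset.mem_of_mem_erase hJ
      have hJK : J ≠ K i := (Finset.mem_erase.mp hJ).1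
      refine ha i J hJQ _ _ fun j hj => ?_
      rw [hρdef]
      simp only
      by_cases hjJ : j ∈ J₀
      · rw [if_pos hjJ, if_pos hjJ]
        refine hxy j (Finset.mem_sdiff.mpr ⟨hjJ, ?_⟩)
        rw [hAdef]
        simp only [Finset.mem_inter, not_and]
        intro hjK'
        exact absurd hjK' (Finset.disjoint_left.mp (hQi.2.1 J hJQ (K i) (hKQ i) hJK) hj)
      · rw [if_neg hjJ, if_neg hjJ]
  have := diag_rank_aux (J₀.card) J₀ rfl ⟨j₀, hj₀⟩ (univ : Finset (Fin k))
    (fun _ => (1:F)) f g A hcond key (univ : Finset (Fin n))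
    (fun _ _ => one_ne_zero)
  simpa using this
end

section
/- Let d ≥ 2 and let P, Q be two partitions of [d]. If T : [n₁] × ⋯ × [n_d] → 𝔽 is an order-d tensor with {P}-rank at most r and {Q}-rank at most s, then T has {P ∧ Q}-rank at most (rs)^{|P|}, where P ∧ Q is the least common refinement of P and Q; in particular the {P ∧ Q}-rank of T is at most (rs)^d. -/
open Finset

variable {F : Type*} [Field F]

section Aux
variable {F : Type*} [Field F]


lemma span_functional_closure {X : Type*} {m : ℕ} (v : Fin m → X → F)
    (B : X → (X → F))
    (hB : ∀ u, (fun x => B x u) ∈ Submodule.span F (Set.range v))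
    (φ : (X → F) →ₗ[F] F) :
    (fun x => φ (B x)) ∈ Submodule.span F (Set.range v) := by
  have hc : ∀ u, ∃ c : Fin m → F, ∑ q, c q • v q = fun x => B x u := by
    intro u
    exact (Submodule.mem_span_range_iff_exists_fun F).1 (hB u)
  choose c hc using hc
  have hBx : ∀ x, B x = ∑ q, v q x • (fun u => c u q) := by
    intro x
    funext u
    have := congrFun (hc u) x
    simp only [Finset.sum_apply, Pi.smul_apply, smul_eq_mul] at this ⊢
    rw [← this]
    exact Finset.sum_congr rfl fun q _ => mul_comm _ _
  have : (fun x => φ (B x)) = ∑ q, φ (fun u => c u q) • v q := by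
    funext x
    rw [hBx x]
    simp only [map_sum, map_smul, smul_eq_mul, Finset.sum_apply, Pi.smul_apply]
    exact Finset.sum_congr rfl fun q _ => mul_comm _ _
  rw [this]
  exact Submodule.sum_mem _ fun q _ =>
    Submodule.smul_mem _ _ (Submodule.subset_span (Set.mem_range_self q))

lemma exists_basis_functionals {X : Type*} (G : Set (X → F)) (r : ℕ) (a : Fin r → X → F)
    (hG : G ⊆ (Submodule.span F (Set.range a) : Submodule F (X → F))) :
    ∃ (t : ℕ) (e : Fin t → X → F) (φ : Fin t → ((X → F) →ₗ[F] F)),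
      t ≤ r ∧ (∀ m, e m ∈ G) ∧
      Submodule.span F (Set.range e) = Submodule.span F G ∧
      ∀ g ∈ Submodule.span F G, g = ∑ m, φ m g • e m := by
  classical
  obtain ⟨b, hbG, hspan, hli⟩ := exists_linearIndependent F G
  -- b is finite with card ≤ r
  haveI : FiniteDimensional F (Submodule.span F (Set.range a)) :=
    FiniteDimensional.span_of_finite F (Set.finite_range a)
  have hbW : ∀ x : b, (x : X → F) ∈ Submodule.span F (Set.range a) := fun x => hG (hbG x.2)
  have hli' : LinearIndependent F (fun x : b => (⟨x, hbW x⟩ : Submodule.span F (Set.range a))) := by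
    apply LinearIndependent.of_comp (Submodule.span F (Set.range a)).subtype
    exact hli
  haveI hfin : Finite b := hli'.finite
  haveI : Fintype b := Fintype.ofFinite b
  have hcard : Fintype.card b ≤ r := by
    have h1 := hli'.fintype_card_le_finrank
    have h2 : Module.finrank F (Submodule.span F (Set.range a)) ≤ r := by
      letI := (Set.finite_range a).fintype
      refine le_trans (finrank_span_le_card (Set.range a)) ?_
      rw [Set.toFinset_card]
      exact le_trans (Fintype.card_range_le a) (by simp)
    exact le_trans h1 h2
  set t := Fintype.card b with ht
  obtain σ := (Fintype.equivFin b).symm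
  set e : Fin t → X → F := fun m => (σ m : X → F) with he
  have hrange : Set.range e = b := by
    rw [he]
    ext g
    constructor
    · rintro ⟨m, rfl⟩; exact (σ m).2
    · intro hg; exact ⟨σ.symm ⟨g, hg⟩, by simp⟩
  have hlie : LinearIndependent F e := by
    have : e = Subtype.val ∘ σ := rfl
    rw [this]
    exact hli.comp σ σ.injective
  have hspan' : Submodule.span F (Set.range e) = Submodule.span F G := by
    rw [hrange, hspan]
  -- basis of span of range e
  let B := Module.Basis.span hlie
  obtain ⟨q, hq⟩ := Submodule.exists_isCompl (Submodule.span F (Set.range e))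
  let proj := (Submodule.span F (Set.range e)).linearProjOfIsCompl q hq
  refine ⟨t, e, fun m => (B.coord m).comp proj, hcard, ?_, hspan', ?_⟩
  · intro m
    exact hbG (by rw [← hrange]; exact Set.mem_range_self m)
  · intro g hg
    rw [← hspan'] at hg
    have hproj : proj g = ⟨g, hg⟩ := Submodule.linearProjOfIsCompl_apply_left hq ⟨g, hg⟩
    have hphi : ∀ m, ((B.coord m).comp proj) g = B.repr ⟨g, hg⟩ m := by
      intro m
      simp only [LinearMap.comp_apply, hproj]
      rfl
    have h2 := congrArg (Subtype.val) (B.sum_repr ⟨g, hg⟩)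
    have h3 : ((∑ m, B.repr ⟨g, hg⟩ m • B m : Submodule.span F (Set.range e)) : X → F)
        = ∑ m, B.repr ⟨g, hg⟩ m • (B m : X → F) := by rw [Submodule.coe_sum]; rfl
    calc g = ∑ m, B.repr ⟨g, hg⟩ m • (B m : X → F) := by rw [← h3, h2]
    _ = ∑ m, ((B.coord m).comp proj) g • e m := by
        refine Finset.sum_congr rfl fun m _ => ?_
        rw [Module.Basis.span_apply, hphi]


/-- Override `z` with `x` on the coordinates in `J`. -/
def patch {d : ℕ} {n : Fin d → ℕ} (J : Finset (Fin d)) (z x : ∀ j, Fin (n j)) :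
    ∀ j, Fin (n j) := fun j => if j ∈ J then x j else z j

lemma patch_self {d : ℕ} {n : Fin d → ℕ} (J : Finset (Fin d)) (x : ∀ j, Fin (n j)) :
    patch J x x = x := by
  funext j; simp [patch]

lemma patch_comm {d : ℕ} {n : Fin d → ℕ} {J J₀ : Finset (Fin d)} (hdisj : Disjoint J J₀)
    (z x u : ∀ j, Fin (n j)) :
    patch J₀ (patch J z x) u = patch J (patch J₀ z u) x := by
  funext j
  by_cases hJ : j ∈ J
  · have hJ₀ : j ∉ J₀ := fun h => (Finset.disjoint_left.1 hdisj hJ) h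
    simp [patch, hJ, hJ₀]
  · by_cases hJ₀ : j ∈ J₀ <;> simp [patch, hJ, hJ₀]

lemma main_ind {d : ℕ} {n : Fin d → ℕ} (r : ℕ)
    (t : Finset (Fin d) → ℕ)
    (e : (J : Finset (Fin d)) → Fin (t J) → ((∀ j, Fin (n j)) → F))
    (φ : (J : Finset (Fin d)) → Fin (t J) → (((∀ j, Fin (n j)) → F) →ₗ[F] F))
    (hrecon : ∀ J, ∀ g ∈ Submodule.span F (Set.range (e J)), g = ∑ m, φ J m g • e J m)
    (S : Finset (Finset (Fin d)))
    (hdisj : ∀ J ∈ S, ∀ K ∈ S, J ≠ K → Disjoint J K)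
    (h : (∀ j, Fin (n j)) → F)
    (hdep : DependsOnlyOn h (S.sup id))
    (hcol : ∀ J ∈ S, ∀ z, (fun x => h (patch J z x)) ∈ Submodule.span F (Set.range (e J))) :
    ∃ (w : Fin (∏ J ∈ S, t J) → F)
      (g : Fin (∏ J ∈ S, t J) → Finset (Fin d) → ((∀ j, Fin (n j)) → F)),
      (∀ k J, J ∈ S → ∃ m, g k J = e J m) ∧
      ∀ x, h x = ∑ k, w k * ∏ J ∈ S, g k J x := by
  classical
  induction S using Finset.induction_on generalizing h with
  | empty =>
    refine ⟨fun _ => if hX : Nonempty (∀ j, Fin (n j)) then h (Classical.choice hX) else 0,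
      fun _ _ => 0, by simp, ?_⟩
    intro x
    have hX : Nonempty (∀ j, Fin (n j)) := ⟨x⟩
    rw [dif_pos hX]
    simp only [Finset.prod_empty, mul_one, Finset.sum_const, Finset.card_univ,
      Fintype.card_fin]
    have : h x = h (Classical.choice hX) := hdep _ _ (by simp)
    rw [this]
    exact (one_smul ℕ _).symm
  | @insert J₀ S' hJ₀ ih =>
    have hmemJ₀ : J₀ ∈ insert J₀ S' := Finset.mem_insert_self _ _
    set h' : Fin (t J₀) → (∀ j, Fin (n j)) → F :=
      fun m z => φ J₀ m (fun x => h (patch J₀ z x)) with hh'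
    have key : ∀ z x, h (patch J₀ z x) = ∑ m, h' m z * e J₀ m x := by
      intro z x
      have h1 := hrecon J₀ _ (hcol J₀ hmemJ₀ z)
      have h2 := congrFun h1 x
      simpa [Finset.sum_apply, Pi.smul_apply, smul_eq_mul] using h2
    have hyp : ∀ m : Fin (t J₀),
        ∃ (w : Fin (∏ J ∈ S', t J) → F)
          (g : Fin (∏ J ∈ S', t J) → Finset (Fin d) → ((∀ j, Fin (n j)) → F)),
          (∀ k J, J ∈ S' → ∃ m', g k J = e J m') ∧
          ∀ x, h' m x = ∑ k, w k * ∏ J ∈ S', g k J x := by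
      intro m
      apply ih (fun J hJ K hK hne =>
        hdisj J (Finset.mem_insert_of_mem hJ) K (Finset.mem_insert_of_mem hK) hne)
      · intro x y hxy
        show φ J₀ m _ = φ J₀ m _
        congr 1
        funext u
        apply hdep
        intro j hj
        rw [Finset.sup_insert] at hj
        rcases Finset.mem_union.1 hj with hj₀ | hj'
        · have : j ∈ J₀ := hj₀
          simp [patch, this]
        · by_cases hjJ : j ∈ J₀
          · simp [patch, hjJ]
          · simp only [patch, if_neg hjJ]
            exact hxy j hj'
      · intro J hJ z
        have hne : J ≠ J₀ := by rintro rfl; exact hJ₀ hJ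
        have hdisjJ : Disjoint J J₀ :=
          hdisj J (Finset.mem_insert_of_mem hJ) J₀ hmemJ₀ hne
        have hrw : (fun x => h' m (patch J z x))
            = fun x => φ J₀ m (fun u => h (patch J (patch J₀ z u) x)) := by
          funext x
          show φ J₀ m _ = φ J₀ m _
          congr 1
          funext u
          rw [patch_comm hdisjJ]
        rw [hrw]
        exact span_functional_closure (e J)
          (fun x => fun u => h (patch J (patch J₀ z u) x))
          (fun u => hcol J (Finset.mem_insert_of_mem hJ) (patch J₀ z u)) (φ J₀ m)
    choose w' g' hg' heq' using hyp
    rw [Finset.prod_insert hJ₀]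
    refine ⟨fun k => w' (finProdFinEquiv.symm k).1 (finProdFinEquiv.symm k).2,
      fun k J => if J = J₀ then e J₀ (finProdFinEquiv.symm k).1
                 else g' (finProdFinEquiv.symm k).1 (finProdFinEquiv.symm k).2 J, ?_, ?_⟩
    · intro k J hJ
      dsimp only
      rcases Finset.mem_insert.1 hJ with rfl | hJ'
      · rw [if_pos rfl]; exact ⟨_, rfl⟩
      · have hne : J ≠ J₀ := by rintro rfl; exact hJ₀ hJ'
        rw [if_neg hne]; exact hg' _ _ _ hJ'
    · intro x
      have hx : h x = ∑ m, h' m x * e J₀ m x := by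
        conv_lhs => rw [← patch_self J₀ x]
        exact key x x
      rw [hx, ← Equiv.sum_comp finProdFinEquiv, Fintype.sum_prod_type]
      refine Finset.sum_congr rfl fun m _ => ?_
      rw [heq' m x, Finset.sum_mul]
      refine Finset.sum_congr rfl fun k' _ => ?_
      simp only [Equiv.symm_apply_apply]
      rw [Finset.prod_insert hJ₀, if_pos rfl]
      have : ∏ J ∈ S', (if J = J₀ then e J₀ m else g' m k' J) x
          = ∏ J ∈ S', g' m k' J x := by
        refine Finset.prod_congr rfl fun J hJ => ?_
        rw [if_neg (show J ≠ J₀ by rintro rfl; exact hJ₀ hJ)]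
      rw [this]
      ring


lemma partMeet_nonempty {d : ℕ} {P Q : Finset (Finset (Fin d))} (hd : 0 < d)
    (hP : IsPartitionOn d P) (hQ : IsPartitionOn d Q) : (partMeet P Q).Nonempty := by
  classical
  set j : Fin d := ⟨0, hd⟩
  have hjP : j ∈ P.sup id := by rw [hP.2.2]; exact Finset.mem_univ j
  have hjQ : j ∈ Q.sup id := by rw [hQ.2.2]; exact Finset.mem_univ j
  obtain ⟨J, hJ, hjJ⟩ := Finset.mem_sup.1 hjP
  obtain ⟨K, hK, hjK⟩ := Finset.mem_sup.1 hjQ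
  refine ⟨J ∩ K, Finset.mem_filter.2 ⟨Finset.mem_image.2 ⟨(J, K),
    Finset.mem_product.2 ⟨hJ, hK⟩, rfl⟩, ⟨j, Finset.mem_inter.2 ⟨hjJ, hjK⟩⟩⟩⟩

lemma rankone_zero {d : ℕ} {n : Fin d → ℕ} {P Q : Finset (Finset (Fin d))} (hd : 0 < d)
    (hP : IsPartitionOn d P) (hQ : IsPartitionOn d Q) :
    RankOne ({partMeet P Q} : Finset (Finset (Finset (Fin d))))
      (fun _ : ∀ j, Fin (n j) => (0 : F)) := by
  obtain ⟨M₀, hM₀⟩ := partMeet_nonempty hd hP hQ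
  refine ⟨partMeet P Q, Finset.mem_singleton_self _, fun _ _ => 0,
    fun J _ x y _ => rfl, fun x => ?_⟩
  exact (Finset.prod_eq_zero hM₀ rfl).symm

lemma rankone_absorb {d : ℕ} {n : Fin d → ℕ} {P Q : Finset (Finset (Fin d))}
    (hd : 0 < d) (hP : IsPartitionOn d P) (hQ : IsPartitionOn d Q)
    (w : F) (B : Finset (Fin d) → Finset (Fin d) → (∀ j, Fin (n j)) → F)
    (hdep : ∀ J ∈ P, ∀ K ∈ Q, DependsOnlyOn (B J K) (J ∩ K)) :
    RankOne ({partMeet P Q} : Finset (Finset (Finset (Fin d))))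
      (fun x => w * ∏ J ∈ P, ∏ K ∈ Q, B J K x) := by
  classical
  obtain ⟨M₀, hM₀⟩ := partMeet_nonempty hd hP hQ
  have hfac : ∀ (N : Finset (Fin d)) (x y : ∀ j, Fin (n j)), (∀ j ∈ N, x j = y j) →
      ∏ p ∈ (P ×ˢ Q).filter (fun p => p.1 ∩ p.2 = N), B p.1 p.2 x
      = ∏ p ∈ (P ×ˢ Q).filter (fun p => p.1 ∩ p.2 = N), B p.1 p.2 y := by
    intro N x y hxy
    refine Finset.prod_congr rfl fun p hp => ?_
    obtain ⟨hpPQ, hpN⟩ := Finset.mem_filter.1 hp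
    obtain ⟨hp1, hp2⟩ := Finset.mem_product.1 hpPQ
    exact hdep p.1 hp1 p.2 hp2 x y (fun j hj => hxy j (hpN ▸ hj))
  refine ⟨partMeet P Q, Finset.mem_singleton_self _, fun M x =>
    (if M = M₀ then w * ∏ p ∈ (P ×ˢ Q).filter (fun p => p.1 ∩ p.2 = ∅), B p.1 p.2 x else 1)
    * ∏ p ∈ (P ×ˢ Q).filter (fun p => p.1 ∩ p.2 = M), B p.1 p.2 x, ?_, ?_⟩
  · intro M hM x y hxy
    dsimp only
    have h1 := hfac M x y hxy
    have h2 := hfac ∅ x y (fun j hj => absurd hj (Finset.notMem_empty j))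
    by_cases hM0 : M = M₀
    · rw [if_pos hM0, if_pos hM0, h1, h2]
    · rw [if_neg hM0, if_neg hM0, h1]
  · intro x
    dsimp only
    rw [Finset.prod_mul_distrib, Finset.prod_ite_eq', if_pos hM₀]
    have hmap : ∀ p ∈ (P ×ˢ Q).filter (fun p => (p.1 ∩ p.2).Nonempty),
        p.1 ∩ p.2 ∈ partMeet P Q := by
      intro p hp
      obtain ⟨hpPQ, hpne⟩ := Finset.mem_filter.1 hp
      exact Finset.mem_filter.2 ⟨Finset.mem_image.2 ⟨p, hpPQ, rfl⟩, hpne⟩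
    have hfib0 := Finset.prod_fiberwise_of_maps_to hmap (fun p => B p.1 p.2 x)
    have hinner : ∀ M ∈ partMeet P Q,
        Finset.filter (fun p => p.1 ∩ p.2 = M)
          ((P ×ˢ Q).filter (fun p => (p.1 ∩ p.2).Nonempty))
        = (P ×ˢ Q).filter (fun p => p.1 ∩ p.2 = M) := by
      intro M hM
      rw [Finset.filter_filter]
      refine Finset.filter_congr fun p _ => ?_
      have hMne : M.Nonempty := (Finset.mem_filter.1 hM).2
      constructor
      · exact fun hp => hp.2
      · intro hp
        exact ⟨by rw [hp]; exact hMne, hp⟩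
    have hfib : ∏ M ∈ partMeet P Q,
        ∏ p ∈ (P ×ˢ Q).filter (fun p => p.1 ∩ p.2 = M), B p.1 p.2 x
        = ∏ p ∈ (P ×ˢ Q).filter (fun p => (p.1 ∩ p.2).Nonempty), B p.1 p.2 x := by
      rw [← hfib0]
      exact Finset.prod_congr rfl (fun M hM => by rw [hinner M hM])
    rw [hfib]
    have hsplit : ∏ p ∈ P ×ˢ Q, B p.1 p.2 x
        = (∏ p ∈ (P ×ˢ Q).filter (fun p => (p.1 ∩ p.2).Nonempty), B p.1 p.2 x)
        * ∏ p ∈ (P ×ˢ Q).filter (fun p => p.1 ∩ p.2 = ∅), B p.1 p.2 x := by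
      rw [← Finset.prod_filter_mul_prod_filter_not (P ×ˢ Q)
        (fun p => (p.1 ∩ p.2).Nonempty) (fun p => B p.1 p.2 x)]
      congr 1
      refine Finset.prod_congr ?_ fun _ _ => rfl
      refine Finset.filter_congr fun p _ => ?_
      rw [Finset.not_nonempty_iff_eq_empty]
    have hprod : ∏ J ∈ P, ∏ K ∈ Q, B J K x = ∏ p ∈ P ×ˢ Q, B p.1 p.2 x := by
      rw [Finset.prod_product]
    rw [hprod, hsplit]
    ring

lemma sum_to_rankLE {d : ℕ} {n : Fin d → ℕ} {R : Finset (Finset (Finset (Fin d)))}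
    (T : (∀ j, Fin (n j)) → F) {ι : Type*} (A : Finset ι)
    (f : ι → (∀ j, Fin (n j)) → F) (k : ℕ) (hcard : A.card ≤ k)
    (hone : ∀ i ∈ A, RankOne R (f i))
    (hzero : RankOne R (fun _ : ∀ j, Fin (n j) => (0 : F)))
    (hT : ∀ x, T x = ∑ i ∈ A, f i x) : RRankLE R T k := by
  classical
  refine ⟨fun i => if h : (i : ℕ) < A.card then f (A.equivFin.symm ⟨i, h⟩) else fun _ => 0,
    ?_, ?_⟩
  · intro i
    dsimp only
    by_cases h : (i : ℕ) < A.card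
    · rw [dif_pos h]; exact hone _ (A.equivFin.symm _).2
    · rw [dif_neg h]; exact hzero
  · intro x
    rw [hT]
    have hstep : ∀ i : Fin k,
        (if h : (i : ℕ) < A.card then f (A.equivFin.symm ⟨i, h⟩) else fun _ => 0) x
        = (fun m : ℕ => if h : m < A.card then f (A.equivFin.symm ⟨m, h⟩) x else 0) (i : ℕ) := by
      intro i
      by_cases h : (i : ℕ) < A.card <;> simp [h]
    rw [Finset.sum_congr rfl (fun i _ => hstep i)]
    rw [Fin.sum_univ_eq_sum_range (fun m => if h : m < A.card then f (A.equivFin.symm ⟨m, h⟩) x else 0) k]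
    rw [← Finset.sum_subset (Finset.range_subset_range.2 hcard)
      (fun m _ hm => dif_neg (by simpa using hm))]
    rw [← Fin.sum_univ_eq_sum_range (fun m => if h : m < A.card then f (A.equivFin.symm ⟨m, h⟩) x else 0) A.card]
    have : ∀ i : Fin A.card,
        (if h : (i : ℕ) < A.card then f (A.equivFin.symm ⟨(i : ℕ), h⟩) x else 0)
        = f (A.equivFin.symm i) x := by
      intro i
      rw [dif_pos i.isLt]
    rw [Finset.sum_congr rfl (fun i _ => this i)]
    rw [Equiv.sum_comp A.equivFin.symm (fun a => f (a : ι) x)]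
    exact (Finset.sum_coe_sort A (fun i => f i x)).symm

lemma partition_card_le {d : ℕ} {P : Finset (Finset (Fin d))}
    (hP : IsPartitionOn d P) : P.card ≤ d := by
  classical
  have h1 : (P.sup id).card = d := by rw [hP.2.2]; simp
  have h2 := Finset.card_biUnion (s := P) (t := id)
    (fun J hJ K hK hne => hP.2.1 J hJ K hK hne)
  rw [Finset.sup_eq_biUnion, h2] at h1
  calc P.card = ∑ _J ∈ P, 1 := by simp
  _ ≤ ∑ J ∈ P, (id J).card := Finset.sum_le_sum
      (fun J hJ => Finset.card_pos.2 (hP.1 J hJ))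
  _ = d := h1


end Aux

theorem meet_rank_of_two_single_partitions {d : ℕ} (hd : 2 ≤ d)
    (n : Fin d → ℕ) (P Q : Finset (Finset (Fin d)))
    (hP : IsPartitionOn d P) (hQ : IsPartitionOn d Q)
    (r s : ℕ) (T : (∀ j, Fin (n j)) → F)
    (hr : RRankLE ({P} : Finset (Finset (Finset (Fin d)))) T r)
    (hs : RRankLE ({Q} : Finset (Finset (Finset (Fin d)))) T s) :
    RRankLE ({partMeet P Q} : Finset (Finset (Finset (Fin d)))) T ((r * s) ^ P.card) ∧
    RRankLE ({partMeet P Q} : Finset (Finset (Finset (Fin d)))) T ((r * s) ^ d) := by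
  classical
  have hd0 : 0 < d := lt_of_lt_of_le two_pos hd
  obtain ⟨cP, hcP1, hcP2⟩ := hr
  obtain ⟨cQ, hcQ1, hcQ2⟩ := hs
  have haP : ∀ i, ∃ a : Finset (Fin d) → (∀ j, Fin (n j)) → F,
      (∀ J ∈ P, DependsOnlyOn (a J) J) ∧ ∀ x, cP i x = ∏ J ∈ P, a J x := by
    intro i
    obtain ⟨P', hP', a, h1, h2⟩ := hcP1 i
    rw [Finset.mem_singleton] at hP'
    subst hP'
    exact ⟨a, h1, h2⟩
  choose a ha1 ha2 using haP
  have hbQ : ∀ l, ∃ b : Finset (Fin d) → (∀ j, Fin (n j)) → F,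
      (∀ K ∈ Q, DependsOnlyOn (b K) K) ∧ ∀ x, cQ l x = ∏ K ∈ Q, b K x := by
    intro l
    obtain ⟨Q', hQ', b, h1, h2⟩ := hcQ1 l
    rw [Finset.mem_singleton] at hQ'
    subst hQ'
    exact ⟨b, h1, h2⟩
  choose b hb1 hb2 using hbQ
  have hT_P : ∀ x, T x = ∑ i, ∏ J ∈ P, a i J x := by
    intro x
    rw [hcP2 x]
    exact Finset.sum_congr rfl fun i _ => ha2 i x
  have hT_Q : ∀ x, T x = ∑ l, ∏ K ∈ Q, b l K x := by
    intro x
    rw [hcQ2 x]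
    exact Finset.sum_congr rfl fun l _ => hb2 l x
  -- slice data for every part J of P
  have hLA : ∀ J : Finset (Fin d),
      ∃ (t : ℕ) (e : Fin t → (∀ j, Fin (n j)) → F)
        (φ : Fin t → (((∀ j, Fin (n j)) → F) →ₗ[F] F)),
        t ≤ r ∧
        (∀ g ∈ Submodule.span F (Set.range e), g = ∑ m, φ m g • e m) ∧
        (J ∈ P → (∀ m, ∃ z, e m = fun x => T (patch J z x)) ∧
          ∀ z, (fun x => T (patch J z x)) ∈ Submodule.span F (Set.range e)) := by
    intro J
    by_cases hJ : J ∈ P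
    · -- every slice lies in the span of the `a i J`
      have hslice : ∀ z, (fun x => T (patch J z x))
          ∈ Submodule.span F (Set.range (fun i => a i J)) := by
        intro z
        rw [Submodule.mem_span_range_iff_exists_fun]
        refine ⟨fun i => ∏ J' ∈ P.erase J, a i J' z, ?_⟩
        funext x
        rw [Finset.sum_apply]
        rw [hT_P (patch J z x)]
        refine (Finset.sum_congr rfl fun i _ => ?_).symm
        rw [← Finset.mul_prod_erase P (fun J' => a i J' (patch J z x)) hJ]
        have e1 : a i J (patch J z x) = a i J x := by
          apply ha1 i J hJ
          intro j hj
          simp [patch, hj]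
        have e2 : ∀ J' ∈ P.erase J, a i J' (patch J z x) = a i J' z := by
          intro J' hJ'
          obtain ⟨hne, hJ'P⟩ := Finset.mem_erase.1 hJ'
          apply ha1 i J' hJ'P
          intro j hj
          have hjJ : j ∉ J := Finset.disjoint_left.1 (hP.2.1 J' hJ'P J hJ hne) hj
          simp [patch, hjJ]
        rw [e1, Finset.prod_congr rfl e2]
        simp [mul_comm]
      have hGsub : {g : (∀ j, Fin (n j)) → F | ∃ z, g = fun x => T (patch J z x)}
          ⊆ (Submodule.span F (Set.range (fun i => a i J)) :
              Submodule F ((∀ j, Fin (n j)) → F)) := by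
        rintro g ⟨z, rfl⟩
        exact hslice z
      obtain ⟨t, e, φ, hle, hmemG, hspan, hrecon⟩ :=
        exists_basis_functionals {g : (∀ j, Fin (n j)) → F | ∃ z, g = fun x => T (patch J z x)}
          r (fun i => a i J) hGsub
      refine ⟨t, e, φ, hle, ?_, fun _ => ⟨hmemG, ?_⟩⟩
      · intro g hg
        rw [hspan] at hg
        exact hrecon g hg
      · intro z
        rw [hspan]
        exact Submodule.subset_span ⟨z, rfl⟩
    · refine ⟨0, Fin.elim0, Fin.elim0, Nat.zero_le r, ?_, fun hJP => absurd hJP hJ⟩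
      intro g hg
      have : g = 0 := by
        simpa [Set.range_eq_empty, Submodule.span_empty, Submodule.mem_bot] using hg
      rw [this]
      simp
  choose t e φ ht hrecon hmem using hLA
  have hdep : DependsOnlyOn T (P.sup id) := by
    intro x y hxy
    have : x = y := funext fun j => hxy j (by rw [hP.2.2]; exact Finset.mem_univ j)
    rw [this]
  have hcol : ∀ J ∈ P, ∀ z,
      (fun x => T (patch J z x)) ∈ Submodule.span F (Set.range (e J)) :=
    fun J hJ z => (hmem J hJ).2 z
  obtain ⟨w, g, hg, hTg⟩ := main_ind r t e φ hrecon P hP.2.1 T hdep hcol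
  -- Q-expansion of each chosen slice
  have hexp : ∀ (k : Fin (∏ J ∈ P, t J)) (J : Finset (Fin d)), J ∈ P →
      ∃ bb : Fin s → Finset (Fin d) → (∀ j, Fin (n j)) → F,
        (∀ l K, K ∈ Q → DependsOnlyOn (bb l K) (J ∩ K)) ∧
        ∀ x, g k J x = ∑ l, ∏ K ∈ Q, bb l K x := by
    intro k J hJ
    obtain ⟨m, hm⟩ := hg k J hJ
    obtain ⟨z, hz⟩ := (hmem J hJ).1 m
    refine ⟨fun l K x => b l K (patch J z x), ?_, ?_⟩
    · intro l K hK x y hxy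
      apply hb1 l K hK
      intro j hj
      by_cases hjJ : j ∈ J
      · simp only [patch, if_pos hjJ]
        exact hxy j (Finset.mem_inter.2 ⟨hjJ, hj⟩)
      · simp [patch, hjJ]
    · intro x
      rw [hm, hz]
      exact hT_Q (patch J z x)
  choose bb hbb1 hbb2 using hexp
  have hN : (∏ J ∈ P, t J) ≤ r ^ P.card :=
    Finset.prod_le_pow_card _ _ _ (fun J _ => ht J)
  -- the global decomposition into meet-rank-one terms
  have hbig : ∀ x, T x = ∑ q : Fin (∏ J ∈ P, t J) × ({J // J ∈ P} → Fin s),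
      w q.1 * ∏ J : {J // J ∈ P}, ∏ K ∈ Q, bb q.1 J.1 J.2 (q.2 J) K x := by
    intro x
    rw [hTg x, Fintype.sum_prod_type]
    refine Finset.sum_congr rfl fun k _ => ?_
    dsimp only
    rw [← Finset.mul_sum]
    congr 1
    calc ∏ J ∈ P, g k J x = ∏ J : {J // J ∈ P}, g k J.1 x :=
          (Finset.prod_coe_sort P (fun J => g k J x)).symm
    _ = ∏ J : {J // J ∈ P}, ∑ l ∈ (Finset.univ : Finset (Fin s)),
          ∏ K ∈ Q, bb k J.1 J.2 l K x :=
          Finset.prod_congr rfl fun J _ => hbb2 k J.1 J.2 x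
    _ = ∑ μ ∈ Fintype.piFinset (fun _ : {J // J ∈ P} => (Finset.univ : Finset (Fin s))),
          ∏ J : {J // J ∈ P}, ∏ K ∈ Q, bb k J.1 J.2 (μ J) K x :=
          Finset.prod_univ_sum _ _
    _ = ∑ μ : {J // J ∈ P} → Fin s,
          ∏ J : {J // J ∈ P}, ∏ K ∈ Q, bb k J.1 J.2 (μ J) K x := by
          rw [Fintype.piFinset_univ]
  have hone : ∀ q : Fin (∏ J ∈ P, t J) × ({J // J ∈ P} → Fin s),
      RankOne ({partMeet P Q} : Finset (Finset (Finset (Fin d))))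
        (fun x => w q.1 * ∏ J : {J // J ∈ P}, ∏ K ∈ Q, bb q.1 J.1 J.2 (q.2 J) K x) := by
    intro q
    have hro := rankone_absorb hd0 hP hQ (w q.1)
      (fun J K x => if hJ : J ∈ P then bb q.1 J hJ (q.2 ⟨J, hJ⟩) K x else 1)
      (fun J hJ K hK => by
        intro x y hxy
        dsimp only
        rw [dif_pos hJ, dif_pos hJ]
        exact hbb1 q.1 J hJ (q.2 ⟨J, hJ⟩) K hK x y hxy)
    have heq : (fun x => w q.1 * ∏ J : {J // J ∈ P}, ∏ K ∈ Q, bb q.1 J.1 J.2 (q.2 J) K x)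
        = fun x => w q.1 * ∏ J ∈ P, ∏ K ∈ Q,
            (if hJ : J ∈ P then bb q.1 J hJ (q.2 ⟨J, hJ⟩) K x else 1) := by
      funext x
      congr 1
      rw [← Finset.prod_coe_sort P (fun J => ∏ K ∈ Q,
        (if hJ : J ∈ P then bb q.1 J hJ (q.2 ⟨J, hJ⟩) K x else 1))]
      refine Finset.prod_congr rfl fun J _ => Finset.prod_congr rfl fun K _ => ?_
      rw [dif_pos J.2]
    rw [heq]
    exact hro
  have hcardtype : Fintype.card (Fin (∏ J ∈ P, t J) × ({J // J ∈ P} → Fin s))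
      = (∏ J ∈ P, t J) * s ^ P.card := by
    simp [Fintype.card_fun]
  have hcardbound : Fintype.card (Fin (∏ J ∈ P, t J) × ({J // J ∈ P} → Fin s))
      ≤ (r * s) ^ P.card := by
    rw [hcardtype, mul_pow]
    exact Nat.mul_le_mul_right _ hN
  have hTsum : ∀ x, T x = ∑ q ∈ (Finset.univ : Finset (Fin (∏ J ∈ P, t J) × ({J // J ∈ P} → Fin s))),
      (fun q : Fin (∏ J ∈ P, t J) × ({J // J ∈ P} → Fin s) =>
        fun x => w q.1 * ∏ J : {J // J ∈ P}, ∏ K ∈ Q, bb q.1 J.1 J.2 (q.2 J) K x) q x :=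
    fun x => hbig x
  constructor
  · refine sum_to_rankLE T Finset.univ _ _ ?_ (fun q _ => hone q)
      (rankone_zero hd0 hP hQ) hTsum
    rw [Finset.card_univ]
    exact hcardbound
  · by_cases hrs : r * s = 0
    · have hT0 : ∀ x, T x = 0 := by
        rcases Nat.mul_eq_zero.1 hrs with h0 | h0
        · intro x
          rw [hcP2 x]
          subst h0
          simp
        · intro x
          rw [hcQ2 x]
          subst h0
          simp
      refine sum_to_rankLE T (∅ : Finset ℕ) (fun _ _ => 0) _ (Nat.zero_le _)
        (by simp) (rankone_zero hd0 hP hQ) (fun x => by simp [hT0 x])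
    · refine sum_to_rankLE T Finset.univ _ _ ?_ (fun q _ => hone q)
        (rankone_zero hd0 hP hQ) hTsum
      rw [Finset.card_univ]
      refine le_trans hcardbound ?_
      exact Nat.pow_le_pow_right (Nat.pos_of_ne_zero hrs) (partition_card_le hP)
end
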